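/- arXiv:math/0509727 — 7 statements merged into one kernel-verified Lean document; each statement's English description precedes it below -/
import Mathlib

section
/- Let p(y) = p₀(y−c₀)⋯(y−cₙ) be a complex polynomial of degree n+1 in one variable with p₀ ≠ 0, and let q(y) be a polynomial of degree at most n. Let δ > 0 satisfy: (i) |cᵢ − cⱼ| > 2δ for all i ≠ j, and (ii) max over |y| ≤ maxᵢ|cᵢ| + δ of |q(y)| is strictly less than |p₀|δ^{n+1}. Then the polynomial P(y) = p(y) + q(y) has a root in the open δ-neighborhood of each root cᵢ of p. -/
open Polynomial

lemma norm_prod_lower (δ : ℝ) (hδ : 0 ≤ δ) (s : Multiset ℂ)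
    (h : ∀ x ∈ s, δ ≤ ‖x‖) : δ ^ s.card ≤ ‖s.prod‖ := by
  induction s using Multiset.induction with
  | empty => simp
  | cons a s ih =>
    rw [Multiset.prod_cons, Multiset.card_cons, pow_succ, norm_mul, mul_comm (δ ^ _)]
    exact mul_le_mul (h a (Multiset.mem_cons_self a s))
      (ih fun x hx => h x (Multiset.mem_cons_of_mem hx)) (pow_nonneg hδ _) (norm_nonneg _)

/-- If `p(y) = p₀ (y - c₀)⋯(y - cₙ)` with roots pairwise at distance `> 2δ`, and
`q` has degree `≤ n` with `|q| < |p₀| δ^(n+1)` on the disc `|y| ≤ maxᵢ |cᵢ| + δ`,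
then `p + q` has a root in the open `δ`-disc around each `cᵢ`. -/
theorem stmt1 (n : ℕ) (p₀ : ℂ) (hp₀ : p₀ ≠ 0) (c : Fin (n + 1) → ℂ)
    (q : Polynomial ℂ) (hq : q.degree ≤ n) (δ : ℝ) (hδ : 0 < δ)
    (hsep : ∀ i j, i ≠ j → ‖c i - c j‖ > 2 * δ)
    (hsmall : ∀ y : ℂ,
      ‖y‖ ≤ (Finset.univ.sup' Finset.univ_nonempty fun i => ‖c i‖) + δ →
      ‖q.eval y‖ < ‖p₀‖ * δ ^ (n + 1)) :
    ∀ i, ∃ y : ℂ, ‖y - c i‖ < δ ∧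
      (C p₀ * ∏ j, (X - C (c j)) + q).eval y = 0 := by
  intro i
  set P : Polynomial ℂ := C p₀ * ∏ j, (X - C (c j)) + q with hP
  by_contra hcon
  push_neg at hcon
  -- degree facts
  have hmon : (∏ j : Fin (n+1), (X - C (c j))).Monic :=
    monic_prod_of_monic _ _ fun j _ => monic_X_sub_C (c j)
  have hdegprod : (∏ j : Fin (n+1), (X - C (c j))).degree = ((n + 1 : ℕ) : WithBot ℕ) := by
    rw [degree_prod]
    simp [degree_X_sub_C]
  have hdeg1 : (C p₀ * ∏ j : Fin (n+1), (X - C (c j))).degree = ((n + 1 : ℕ) : WithBot ℕ) := by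
    rw [degree_C_mul hp₀, hdegprod]
  have hqlt : q.degree < (C p₀ * ∏ j : Fin (n+1), (X - C (c j))).degree := by
    rw [hdeg1]
    exact lt_of_le_of_lt hq (by exact_mod_cast Nat.cast_lt.2 (Nat.lt_succ_self n))
  have hlead : (C p₀ * ∏ j : Fin (n+1), (X - C (c j))).leadingCoeff = p₀ := by
    rw [leadingCoeff_mul, leadingCoeff_C, hmon.leadingCoeff, mul_one]
  have hdegP : P.degree = ((n + 1 : ℕ) : WithBot ℕ) := by
    rw [hP, ← hdeg1]
    exact degree_add_eq_left_of_degree_lt hqlt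
  have hleadP : P.leadingCoeff = p₀ := by
    rw [hP, add_comm, leadingCoeff_add_of_degree_lt hqlt, hlead]
  have hPne : P ≠ 0 := leadingCoeff_ne_zero.mp (hleadP ▸ hp₀)
  have hnatdeg : P.natDegree = n + 1 := natDegree_eq_of_degree_eq_some hdegP
  have hsplit : Splits P := IsAlgClosed.splits P
  have hcard : P.roots.card = n + 1 := by
    rw [splits_iff_card_roots.1 hsplit, hnatdeg]
  have hfac : P = C p₀ * (P.roots.map fun a => X - C a).prod := by
    conv_lhs => rw [hsplit.eq_prod_roots, hleadP]
  -- bound on ‖c i‖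
  have hci : ‖c i‖ ≤ (Finset.univ.sup' Finset.univ_nonempty fun i => ‖c i‖) + δ := by
    have : ‖c i‖ ≤ Finset.univ.sup' Finset.univ_nonempty fun i => ‖c i‖ :=
      Finset.le_sup' (fun i => ‖c i‖) (Finset.mem_univ i)
    linarith
  have hsm := hsmall (c i) hci
  -- P.eval (c i) = q.eval (c i)
  have hevP : P.eval (c i) = q.eval (c i) := by
    rw [hP]
    simp only [eval_add, eval_mul, eval_C, eval_prod, eval_sub, eval_X]
    rw [Finset.prod_eq_zero (Finset.mem_univ i) (by ring)]
    ring
  -- lower bound for ‖P.eval (c i)‖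
  have hroot : ∀ a ∈ P.roots, δ ≤ ‖c i - a‖ := by
    intro a ha
    have h0 : P.eval a = 0 := (mem_roots hPne).1 ha
    by_contra hlt
    push_neg at hlt
    have : ‖a - c i‖ < δ := by rwa [norm_sub_rev]
    exact hcon a this h0
  have heval2 : P.eval (c i) = p₀ * (P.roots.map fun a => (c i - a)).prod := by
    conv_lhs => rw [hfac]
    rw [eval_mul, eval_C, eval_multiset_prod, Multiset.map_map]
    simp
  have hnormprod : δ ^ (n + 1) ≤ ‖(P.roots.map fun a => (c i - a)).prod‖ := by
    have hc : (P.roots.map fun a => (c i - a)).card = n + 1 := by simp [hcard]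
    rw [← hc]
    refine norm_prod_lower δ hδ.le _ ?_
    intro x hx
    obtain ⟨a, ha, rfl⟩ := Multiset.mem_map.1 hx
    exact hroot a ha
  have hlow : ‖p₀‖ * δ ^ (n + 1) ≤ ‖P.eval (c i)‖ := by
    rw [heval2, norm_mul]
    exact mul_le_mul_of_nonneg_left hnormprod (norm_nonneg _)
  rw [hevP] at hlow
  exact absurd hsm (not_lt.2 hlow)
end

section
/- For any complex polynomial G(x,y) in two variables of degree at most n, the norm ‖G‖_max (the sum over homogeneous parts of the maximum of their moduli on the unit sphere {|x|²+|y|²=1}) satisfies ‖G‖_max ≤ 2n · max_{|x| ≤ 1, |y| ≤ 1} |G(x,y)|, provided n ≥ 1. -/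
open MvPolynomial

/-- Maximum of `|p|` on the unit sphere of ℂ². -/
noncomputable def sphereMax (p : MvPolynomial (Fin 2) ℂ) : ℝ :=
  sSup {r : ℝ | ∃ x y : ℂ, ‖x‖ ^ 2 + ‖y‖ ^ 2 = 1 ∧ r = ‖MvPolynomial.eval ![x, y] p‖}

/-- The max-norm of a polynomial: the sum over its homogeneous parts of the
maxima of their moduli on the unit sphere. -/
noncomputable def maxNorm (p : MvPolynomial (Fin 2) ℂ) : ℝ :=
  ∑ k ∈ Finset.range (p.totalDegree + 1), sphereMax (homogeneousComponent k p)

/-- Maximum of `|p|` on the closed unit bidisc. -/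
noncomputable def bidiscMax (p : MvPolynomial (Fin 2) ℂ) : ℝ :=
  sSup {r : ℝ | ∃ x y : ℂ, ‖x‖ ≤ 1 ∧ ‖y‖ ≤ 1 ∧ r = ‖MvPolynomial.eval ![x, y] p‖}

/- ### Auxiliary lemmas -/

lemma aux_eval_smul {φ : MvPolynomial (Fin 2) ℂ} {k : ℕ}
    (hφ : φ.IsHomogeneous k) (t : ℂ) (v : Fin 2 → ℂ) :
    MvPolynomial.eval (fun i => t * v i) φ = t ^ k * MvPolynomial.eval v φ := by
  rw [eval_eq', eval_eq', Finset.mul_sum]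
  refine Finset.sum_congr rfl fun d hd => ?_
  have hdeg : ∑ i, d i = k := by
    have h1 := hφ (MvPolynomial.mem_support_iff.mp hd)
    rw [← h1, Finsupp.weight_apply, Finsupp.sum_fintype]
    · simp
    · intro i; rfl
  simp_rw [mul_pow]
  rw [Finset.prod_mul_distrib, Finset.prod_pow_eq_pow_sum, hdeg]
  ring

lemma aux_eval_le_coeffSum (p : MvPolynomial (Fin 2) ℂ) (x y : ℂ)
    (hx : ‖x‖ ≤ 1) (hy : ‖y‖ ≤ 1) :
    ‖MvPolynomial.eval ![x, y] p‖ ≤ ∑ d ∈ p.support, ‖coeff d p‖ := by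
  rw [eval_eq']
  refine (norm_sum_le _ _).trans (Finset.sum_le_sum fun d _ => ?_)
  rw [norm_mul]
  have h1 : ‖∏ i, ![x, y] i ^ d i‖ ≤ 1 := by
    rw [norm_prod]
    refine Finset.prod_le_one (fun i _ => norm_nonneg _) (fun i _ => ?_)
    rw [norm_pow]
    refine pow_le_one₀ (norm_nonneg _) ?_
    fin_cases i <;> simpa
  calc ‖coeff d p‖ * ‖∏ i, ![x, y] i ^ d i‖ ≤ ‖coeff d p‖ * 1 :=
        mul_le_mul_of_nonneg_left h1 (norm_nonneg _)
    _ = ‖coeff d p‖ := mul_one _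

lemma aux_le_bidiscMax (p : MvPolynomial (Fin 2) ℂ) (x y : ℂ)
    (hx : ‖x‖ ≤ 1) (hy : ‖y‖ ≤ 1) :
    ‖MvPolynomial.eval ![x, y] p‖ ≤ bidiscMax p := by
  refine le_csSup ⟨∑ d ∈ p.support, ‖coeff d p‖, ?_⟩ ⟨x, y, hx, hy, rfl⟩
  rintro r ⟨x', y', hx', hy', rfl⟩
  exact aux_eval_le_coeffSum p x' y' hx' hy'

lemma aux_bidiscMax_nonneg (p : MvPolynomial (Fin 2) ℂ) : 0 ≤ bidiscMax p :=
  (norm_nonneg _).trans (aux_le_bidiscMax p 0 0 (by simp) (by simp))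

lemma aux_key_identity (G : MvPolynomial (Fin 2) ℂ) {m : ℕ}
    (hm : m = G.totalDegree + 1) {ζ : ℂ} (hζ : IsPrimitiveRoot ζ m)
    {k : ℕ} (hk : k < m) (x y : ℂ) :
    (m : ℂ) * MvPolynomial.eval ![x, y] (homogeneousComponent k G) =
      ∑ j ∈ Finset.range m, ζ ^ (-((j * k : ℕ) : ℤ)) *
        MvPolynomial.eval ![ζ ^ j * x, ζ ^ j * y] G := by
  have hm0 : m ≠ 0 := by omega
  have hζ0 : ζ ≠ 0 := hζ.ne_zero hm0
  symm
  have hGsum : ∀ j : ℕ, MvPolynomial.eval ![ζ ^ j * x, ζ ^ j * y] G =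
      ∑ l ∈ Finset.range m, (ζ ^ j) ^ l *
        MvPolynomial.eval ![x, y] (homogeneousComponent l G) := by
    intro j
    conv_lhs => rw [← MvPolynomial.sum_homogeneousComponent G]
    rw [map_sum, ← hm]
    refine Finset.sum_congr rfl fun l _ => ?_
    have hv : ![ζ ^ j * x, ζ ^ j * y] = fun i => ζ ^ j * (![x, y] i) := by
      funext i; fin_cases i <;> simp
    rw [hv, aux_eval_smul (homogeneousComponent_isHomogeneous l G)]
  calc ∑ j ∈ Finset.range m, ζ ^ (-((j * k : ℕ) : ℤ)) *
        MvPolynomial.eval ![ζ ^ j * x, ζ ^ j * y] G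
      = ∑ l ∈ Finset.range m, ∑ j ∈ Finset.range m,
          (ζ ^ ((l : ℤ) - (k : ℤ))) ^ j *
            MvPolynomial.eval ![x, y] (homogeneousComponent l G) := by
        rw [Finset.sum_comm]
        refine Finset.sum_congr rfl fun j _ => ?_
        rw [hGsum j, Finset.mul_sum]
        refine Finset.sum_congr rfl fun l _ => ?_
        rw [← mul_assoc]
        congr 1
        simp only [← zpow_natCast]
        simp only [← zpow_mul, ← zpow_add₀ hζ0]
        congr 1
        push_cast
        ring
    _ = ∑ l ∈ Finset.range m, (if l = k then (m : ℂ) else 0) *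
          MvPolynomial.eval ![x, y] (homogeneousComponent l G) := by
        refine Finset.sum_congr rfl fun l hl => ?_
        rw [← Finset.sum_mul]
        congr 1
        rcases eq_or_ne l k with h | h
        · simp [h]
        · rw [if_neg h]
          have hw1 : ζ ^ ((l : ℤ) - (k : ℤ)) ≠ 1 := by
            intro h1
            have hdvd := (hζ.zpow_eq_one_iff_dvd _).mp h1
            rw [Finset.mem_range] at hl
            have : (l : ℤ) - (k : ℤ) = 0 := by
              refine Int.eq_zero_of_abs_lt_dvd hdvd ?_
              rw [abs_sub_lt_iff]
              constructor <;> [skip; skip] <;> push_cast <;> omega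
            exact h (by omega)
          rw [geom_sum_eq hw1]
          have hwm : (ζ ^ ((l : ℤ) - (k : ℤ))) ^ m = 1 := by
            rw [← zpow_natCast (ζ ^ ((l : ℤ) - (k : ℤ))) m, ← zpow_mul,
              mul_comm ((l : ℤ) - (k : ℤ)), zpow_mul, hζ.zpow_eq_one, one_zpow]
          rw [hwm, sub_self, zero_div]
    _ = (m : ℂ) * MvPolynomial.eval ![x, y] (homogeneousComponent k G) := by
        rw [Finset.sum_eq_single k (fun b _ hb => by rw [if_neg hb, zero_mul])
          (fun h => absurd (Finset.mem_range.mpr hk) h)]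
        rw [if_pos rfl]

lemma aux_homog_eval_le (G : MvPolynomial (Fin 2) ℂ) (k : ℕ)
    (hk : k < G.totalDegree + 1) (x y : ℂ) (hx : ‖x‖ ≤ 1) (hy : ‖y‖ ≤ 1) :
    ‖MvPolynomial.eval ![x, y] (homogeneousComponent k G)‖ ≤ bidiscMax G := by
  set m : ℕ := G.totalDegree + 1 with hm
  have hm0 : m ≠ 0 := by omega
  set ζ : ℂ := Complex.exp (2 * Real.pi * Complex.I / m) with hζdef
  have hζ : IsPrimitiveRoot ζ m := Complex.isPrimitiveRoot_exp m hm0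
  have hζnorm : ‖ζ‖ = 1 := by
    have h1 : ‖ζ‖ ^ m = 1 := by
      rw [← norm_pow, hζ.pow_eq_one, norm_one]
    rcases lt_trichotomy (‖ζ‖) 1 with h | h | h
    · have := pow_lt_one₀ (norm_nonneg ζ) h hm0; linarith
    · exact h
    · have := one_lt_pow₀ h hm0; linarith
  have key := aux_key_identity G hm hζ hk x y
  have hmpos : (0 : ℝ) < (m : ℝ) := by positivity
  have hnorm : (m : ℝ) * ‖MvPolynomial.eval ![x, y] (homogeneousComponent k G)‖ ≤
      (m : ℝ) * bidiscMax G := by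
    calc (m : ℝ) * ‖MvPolynomial.eval ![x, y] (homogeneousComponent k G)‖
        = ‖(m : ℂ) * MvPolynomial.eval ![x, y] (homogeneousComponent k G)‖ := by
          rw [norm_mul]; norm_num
      _ = ‖∑ j ∈ Finset.range m, ζ ^ (-((j * k : ℕ) : ℤ)) *
            MvPolynomial.eval ![ζ ^ j * x, ζ ^ j * y] G‖ := by rw [key]
      _ ≤ ∑ j ∈ Finset.range m, ‖ζ ^ (-((j * k : ℕ) : ℤ)) *
            MvPolynomial.eval ![ζ ^ j * x, ζ ^ j * y] G‖ := norm_sum_le _ _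
      _ ≤ ∑ _j ∈ Finset.range m, bidiscMax G := by
          refine Finset.sum_le_sum fun j _ => ?_
          rw [norm_mul, norm_zpow, hζnorm, one_zpow, one_mul]
          refine aux_le_bidiscMax G _ _ ?_ ?_ <;>
            rw [norm_mul, norm_pow, hζnorm, one_pow, one_mul] <;> assumption
      _ = (m : ℝ) * bidiscMax G := by
          rw [Finset.sum_const, Finset.card_range, nsmul_eq_mul]
  exact le_of_mul_le_mul_left hnorm hmpos

lemma aux_sphereMax_le (p : MvPolynomial (Fin 2) ℂ) {B : ℝ} (hB : 0 ≤ B)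
    (h : ∀ x y : ℂ, ‖x‖ ^ 2 + ‖y‖ ^ 2 = 1 → ‖MvPolynomial.eval ![x, y] p‖ ≤ B) :
    sphereMax p ≤ B := by
  refine Real.sSup_le ?_ hB
  rintro r ⟨x, y, hxy, rfl⟩
  exact h x y hxy

/-- For `G` of degree at most `n` (with `n ≥ 1`),
`‖G‖_max ≤ 2n · max_{|x|,|y| ≤ 1} |G(x,y)|`. -/
theorem stmt4 (n : ℕ) (hn : 1 ≤ n) (G : MvPolynomial (Fin 2) ℂ)
    (hG : G.totalDegree ≤ n) :
    maxNorm G ≤ 2 * n * bidiscMax G := by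
  have hB := aux_bidiscMax_nonneg G
  have hstep : ∀ k ∈ Finset.range (G.totalDegree + 1),
      sphereMax (homogeneousComponent k G) ≤ bidiscMax G := by
    intro k hk
    rw [Finset.mem_range] at hk
    refine aux_sphereMax_le _ hB fun x y hxy => ?_
    have hx : ‖x‖ ≤ 1 := by nlinarith [norm_nonneg x, norm_nonneg y, sq_nonneg (‖y‖)]
    have hy : ‖y‖ ≤ 1 := by nlinarith [norm_nonneg x, norm_nonneg y, sq_nonneg (‖x‖)]
    exact aux_homog_eval_le G k hk x y hx hy
  calc maxNorm G ≤ ∑ _k ∈ Finset.range (G.totalDegree + 1), bidiscMax G :=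
        Finset.sum_le_sum hstep
    _ = (G.totalDegree + 1 : ℝ) * bidiscMax G := by
        rw [Finset.sum_const, Finset.card_range]; push_cast; ring
    _ ≤ 2 * n * bidiscMax G := by
        have : (G.totalDegree + 1 : ℝ) ≤ 2 * n := by
          have : (G.totalDegree : ℝ) ≤ n := by exact_mod_cast hG
          have hn' : (1 : ℝ) ≤ n := by exact_mod_cast hn
          linarith
        nlinarith
end

section
/- Let g(x,y) = g₀ ∏_{i=1}^{k} ((x,y), u_i) be a homogeneous polynomial of degree k ≥ 1 in two complex variables, where each u_i ∈ ℂ² is a unit vector and ((x,y), u_i) denotes the Hermitian pairing (linear in (x,y)). Then ‖g‖_max ≤ |g₀| ≤ ‖g‖_max · (2√k)^k, where ‖g‖_max = max_{|x|²+|y|²=1} |g(x,y)|. -/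
open MvPolynomial

private lemma one_le_of_sq' {t : ℝ} (h0 : 0 ≤ t) (h1 : 1 ≤ t ^ 2) : 1 ≤ t := by nlinarith

open Complex Finset in
/-- There is a point on the unit circle where the monic polynomial `∏ (Z - wᵢ)`
has absolute value at least `1`. -/
lemma exists_good_point (k : ℕ) (hk : 1 ≤ k) (w : Fin k → ℂ) :
    ∃ Z : ℂ, ‖Z‖ = 1 ∧ 1 ≤ ∏ i, ‖Z - w i‖ := by
  set n := k + 1 with hn
  set ω : ℂ := Complex.exp (2 * Real.pi * I / n) with hω
  have hprim : IsPrimitiveRoot ω n := Complex.isPrimitiveRoot_exp n (by omega)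
  have hωn : ω ^ n = 1 := hprim.pow_eq_one
  have hωabs : ‖ω‖ = 1 := by
    rw [hω, Complex.norm_exp]
    have : (2 * Real.pi * I / n).re = 0 := by
      simp [Complex.div_re]
    rw [this, Real.exp_zero]
  -- the key algebraic identity
  have key : ∑ j ∈ range n, (ω ^ j * ∏ i, (ω ^ j - w i)) = (n : ℂ) := by
    have expand : ∀ j, ω ^ j * ∏ i, (ω ^ j - w i)
        = ∑ t ∈ (univ : Finset (Fin k)).powerset,
            ((ω ^ (t.card + 1)) ^ j * ∏ i ∈ univ \ t, (-w i)) := by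
      intro j
      have h1 : ∏ i, (ω ^ j - w i) = ∏ i, (ω ^ j + (-w i)) := by
        simp [sub_eq_add_neg]
      rw [h1, Finset.prod_add, Finset.mul_sum]
      refine Finset.sum_congr rfl fun t _ => ?_
      rw [Finset.prod_const, ← pow_mul, ← pow_mul, ← mul_assoc, ← pow_add]
      congr 2
      ring
    simp_rw [expand]
    rw [Finset.sum_comm]
    have hterm : ∀ t ∈ (univ : Finset (Fin k)).powerset,
        (∑ j ∈ range n, (ω ^ (t.card + 1)) ^ j * ∏ i ∈ univ \ t, (-w i))
        = if t = (univ : Finset (Fin k)) then (n : ℂ) else 0 := by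
      intro t _
      rw [← Finset.sum_mul]
      by_cases ht : t = univ
      · subst ht
        have hc : (univ : Finset (Fin k)).card + 1 = n := by simp [hn]
        rw [hc, hωn, if_pos rfl]
        simp
      · rw [if_neg ht]
        have hcard : t.card < k := by
          have := Finset.card_lt_card (lt_of_le_of_ne (Finset.subset_univ t)
            (by simpa using ht))
          simpa using this
        have hne1 : ω ^ (t.card + 1) ≠ 1 := by
          intro h
          have hd := (hprim.pow_eq_one_iff_dvd _).mp h
          have := Nat.le_of_dvd (by omega) hd
          omega
        rw [geom_sum_eq hne1]
        have : (ω ^ (t.card + 1)) ^ n = 1 := by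
          rw [← pow_mul, mul_comm, pow_mul, hωn, one_pow]
        rw [this]
        simp
    rw [Finset.sum_congr rfl hterm]
    simp
  -- deduce existence
  have habs : (n : ℝ) ≤ ∑ j ∈ range n, ∏ i, ‖ω ^ j - w i‖ := by
    calc (n : ℝ) = ‖(n : ℂ)‖ := by simp
    _ = ‖∑ j ∈ range n, (ω ^ j * ∏ i, (ω ^ j - w i))‖ := by rw [key]
    _ ≤ ∑ j ∈ range n, ‖ω ^ j * ∏ i, (ω ^ j - w i)‖ := norm_sum_le _ _
    _ = ∑ j ∈ range n, ∏ i, ‖ω ^ j - w i‖ := by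
        refine Finset.sum_congr rfl fun j _ => ?_
        rw [norm_mul, norm_pow, hωabs, one_pow, one_mul, norm_prod]
  have hex : ∃ j ∈ range n, (1 : ℝ) ≤ ∏ i, ‖ω ^ j - w i‖ := by
    by_contra hcon
    push_neg at hcon
    have : ∑ j ∈ range n, ∏ i, ‖ω ^ j - w i‖ < ∑ j ∈ range n, (1 : ℝ) :=
      Finset.sum_lt_sum_of_nonempty (by simp [hn]) (fun j hj => hcon j hj)
    simp only [Finset.sum_const, Finset.card_range, nsmul_eq_mul, mul_one] at this
    linarith
  obtain ⟨j, _, hj⟩ := hex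
  exact ⟨ω ^ j, by rw [norm_pow, hωabs, one_pow], hj⟩

open Complex in
/-- The key pointwise lower bound for a single linear factor on the unit circle. -/
lemma factor_sq_bound (p q ζ w : ℂ) (hpq : ‖p‖^2 + ‖q‖^2 = 1/2) (hζ : ‖ζ‖ = 1)
    (hw : w = if p * (starRingEnd ℂ) q = 0 then 1 else
        -((starRingEnd ℂ) (p * (starRingEnd ℂ) q)) / (‖p * (starRingEnd ℂ) q‖ : ℂ)) :
    min (1/2) (‖ζ - w‖^2/4) ≤ ‖p*ζ+q‖^2 := by
  set c := p * (starRingEnd ℂ) q with hc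
  have e1 : ‖p*ζ+q‖^2 = 1/2 + 2 * (ζ * c).re := by
    rw [Complex.sq_norm, Complex.normSq_add, Complex.normSq_mul]
    have h1 : normSq ζ = 1 := by rw [Complex.normSq_eq_norm_sq, hζ]; norm_num
    have h2 : normSq p + normSq q = 1/2 := by
      rw [← Complex.sq_norm, ← Complex.sq_norm]
      exact hpq
    have h3 : p * ζ * (starRingEnd ℂ) q = ζ * c := by rw [hc]; ring
    rw [h1, h3]
    linarith
  by_cases h0 : c = 0
  · rw [e1, h0]
    simp
  · rw [if_neg h0] at hw
    obtain ⟨M, hM⟩ : ∃ M : ℝ, M = ‖c‖ := ⟨_, rfl⟩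
    have hMnorm : ‖c‖ = M := hM.symm
    have hM0 : 0 < M := by
      rw [hM]; exact norm_pos_iff.mpr h0
    have hnc : normSq c = M * M := by rw [Complex.normSq_eq_norm_sq, hM]; ring
    have hwnorm : normSq w = 1 := by
      rw [hw, normSq_div, normSq_neg, normSq_conj, hnc, normSq_ofReal, hMnorm]
      field_simp
    have hconjw : (starRingEnd ℂ) w = -c / (M : ℂ) := by
      rw [hw, map_div₀, map_neg, Complex.conj_conj, Complex.conj_ofReal, hMnorm]
    have e2 : ‖ζ - w‖^2 = 2 + 2 * ((ζ * c).re / M) := by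
      rw [Complex.sq_norm, Complex.normSq_sub]
      have h1 : normSq ζ = 1 := by rw [Complex.normSq_eq_norm_sq, hζ]; norm_num
      have h4 : ζ * (starRingEnd ℂ) w = -(ζ * c) / (M : ℂ) := by
        rw [hconjw]; ring
      rw [h1, hwnorm, h4, Complex.div_ofReal_re]
      simp only [Complex.neg_re]
      ring
    set R := (ζ * c).re with hR
    have hRM : |R| ≤ M := by
      have := Complex.abs_re_le_norm (ζ * c)
      rwa [norm_mul, hζ, one_mul, ← hM, ← hR] at this
    have hM4 : M ≤ 1/4 := by
      have : M = ‖p‖ * ‖q‖ := by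
        rw [hM, hc, norm_mul, RCLike.norm_conj]
      nlinarith [sq_nonneg (‖p‖ - ‖q‖)]
    rw [e1, e2]
    rcases le_or_gt 0 R with h | h
    · exact le_trans (min_le_left _ _) (by linarith)
    · refine le_trans (min_le_right _ _) ?_
      have hdiv : R / M ≤ 4 * R := by
        rw [div_le_iff₀ hM0]
        nlinarith
      linarith

/-- Hermitian norm on ℂ². -/
noncomputable def hnorm (v : ℂ × ℂ) : ℝ := Real.sqrt (‖v.1‖ ^ 2 + ‖v.2‖ ^ 2)

open Complex Finset in
/-- For `g(x,y) = g₀ ∏ᵢ ((x,y), uᵢ)` with unit vectors `uᵢ` and `k ≥ 1`: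
`‖g‖_max ≤ |g₀| ≤ ‖g‖_max · (2√k)^k`. -/
theorem stmt6 (k : ℕ) (hk : 1 ≤ k) (g₀ : ℂ) (u : Fin k → ℂ × ℂ)
    (hu : ∀ i, hnorm (u i) = 1)
    (g : MvPolynomial (Fin 2) ℂ)
    (hg : g = C g₀ * ∏ i, (C ((starRingEnd ℂ) (u i).1) * X 0 +
      C ((starRingEnd ℂ) (u i).2) * X 1)) :
    sphereMax g ≤ ‖g₀‖ ∧ ‖g₀‖ ≤ sphereMax g * (2 * Real.sqrt k) ^ k := by
  have hu' : ∀ i, ‖(u i).1‖ ^ 2 + ‖(u i).2‖ ^ 2 = 1 := by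
    intro i
    have := hu i
    rw [hnorm, Real.sqrt_eq_one] at this
    exact this
  have heval : ∀ x y : ℂ, MvPolynomial.eval ![x, y] g
      = g₀ * ∏ i, ((starRingEnd ℂ) (u i).1 * x + (starRingEnd ℂ) (u i).2 * y) := by
    intro x y
    rw [hg]
    simp [Matrix.cons_val_zero, Matrix.cons_val_one, Matrix.head_cons]
  have hfac : ∀ (i : Fin k) (x y : ℂ), ‖x‖ ^ 2 + ‖y‖ ^ 2 = 1 →
      ‖(starRingEnd ℂ) (u i).1 * x + (starRingEnd ℂ) (u i).2 * y‖ ≤ 1 := by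
    intro i x y hxy
    have h1 : ‖(starRingEnd ℂ) (u i).1 * x + (starRingEnd ℂ) (u i).2 * y‖
        ≤ ‖(u i).1‖ * ‖x‖ + ‖(u i).2‖ * ‖y‖ := by
      refine le_trans (norm_add_le _ _) ?_
      rw [norm_mul, norm_mul, RCLike.norm_conj, RCLike.norm_conj]
    refine le_trans h1 ?_
    nlinarith [hu' i, sq_nonneg (‖(u i).1‖ * ‖y‖ - ‖(u i).2‖ * ‖x‖), norm_nonneg (u i).1,
      norm_nonneg (u i).2, norm_nonneg x, norm_nonneg y]
  set S := {r : ℝ | ∃ x y : ℂ, ‖x‖ ^ 2 + ‖y‖ ^ 2 = 1 ∧ r = ‖MvPolynomial.eval ![x, y] g‖}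
    with hS
  have hSle : ∀ r ∈ S, r ≤ ‖g₀‖ := by
    rintro r ⟨x, y, hxy, rfl⟩
    rw [heval x y, norm_mul, norm_prod]
    calc ‖g₀‖ * ∏ i, ‖(starRingEnd ℂ) (u i).1 * x + (starRingEnd ℂ) (u i).2 * y‖
        ≤ ‖g₀‖ * 1 := by
          refine mul_le_mul_of_nonneg_left ?_ (norm_nonneg _)
          exact Finset.prod_le_one (fun i _ => norm_nonneg _) (fun i _ => hfac i x y hxy)
      _ = ‖g₀‖ := mul_one _
  have hbdd : BddAbove S := ⟨‖g₀‖, hSle⟩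
  have hsm : sphereMax g = sSup S := rfl
  refine ⟨by rw [hsm]; exact Real.sSup_le hSle (norm_nonneg _), ?_⟩
  -- RIGHT inequality
  set p : Fin k → ℂ := fun i => ((starRingEnd ℂ) (u i).1 - I * (starRingEnd ℂ) (u i).2) / 2
    with hp
  set q : Fin k → ℂ := fun i => ((starRingEnd ℂ) (u i).1 + I * (starRingEnd ℂ) (u i).2) / 2
    with hq
  have h2 : ∀ z : ℂ, ‖z‖ ^ 2 = normSq z := fun z => by rw [Complex.sq_norm]
  have hpq : ∀ i, ‖p i‖ ^ 2 + ‖q i‖ ^ 2 = 1 / 2 := by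
    intro i
    rw [h2, h2, hp, hq]
    simp only []
    rw [normSq_div, normSq_div, Complex.normSq_sub, Complex.normSq_add, normSq_mul,
      Complex.normSq_I, normSq_conj, normSq_conj]
    have h4 : normSq (2 : ℂ) = 4 := by simp [Complex.normSq_apply]; norm_num
    have ha : normSq (u i).1 + normSq (u i).2 = 1 := by rw [← h2, ← h2]; exact hu' i
    rw [h4]
    ring_nf
    linarith
  set w : Fin k → ℂ := fun i => if p i * (starRingEnd ℂ) (q i) = 0 then 1 else
      -((starRingEnd ℂ) (p i * (starRingEnd ℂ) (q i))) / (‖p i * (starRingEnd ℂ) (q i)‖ : ℂ)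
    with hw
  have hwn : ∀ i, ‖w i‖ = 1 := by
    intro i
    rw [hw]
    simp only []
    by_cases h : p i * (starRingEnd ℂ) (q i) = 0
    · rw [if_pos h]; simp
    · rw [if_neg h, norm_div, norm_neg, RCLike.norm_conj, Complex.norm_real,
        Real.norm_of_nonneg (norm_nonneg _), div_self (norm_ne_zero_iff.mpr h)]
  obtain ⟨ζ, hζn, hζprod⟩ := exists_good_point k hk w
  -- take a square root of ζ
  obtain ⟨Z, hZn, hZ2⟩ : ∃ Z : ℂ, ‖Z‖ = 1 ∧ Z ^ 2 = ζ := by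
    refine ⟨Complex.exp ((ζ.arg / 2 : ℝ) * I), ?_, ?_⟩
    · rw [Complex.norm_exp]
      simp
    · rw [sq, ← Complex.exp_add]
      have : ((ζ.arg / 2 : ℝ) * I) + ((ζ.arg / 2 : ℝ) * I) = (ζ.arg : ℝ) * I := by
        push_cast; ring
      rw [this]
      have h := Complex.norm_mul_exp_arg_mul_I ζ
      rw [hζn] at h
      simpa using h
  have hZZ : Z * (starRingEnd ℂ) Z = 1 := by
    rw [Complex.mul_conj]
    norm_cast
    rw [← Complex.sq_norm, hZn, one_pow]
  -- the chosen point on the sphere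
  set x : ℂ := (Z.re : ℂ) with hx
  set y : ℂ := (Z.im : ℂ) with hy
  have hxy : ‖x‖ ^ 2 + ‖y‖ ^ 2 = 1 := by
    have hns : Complex.normSq Z = 1 := by
      rw [Complex.normSq_eq_norm_sq, hZn]; norm_num
    rw [Complex.normSq_apply] at hns
    rw [hx, hy, Complex.norm_real, Complex.norm_real, Real.norm_eq_abs, Real.norm_eq_abs,
      _root_.sq_abs, _root_.sq_abs]
    linear_combination hns
  -- factor values at the chosen point
  have hfeq : ∀ i, ‖(starRingEnd ℂ) (u i).1 * x + (starRingEnd ℂ) (u i).2 * y‖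
      = ‖p i * ζ + q i‖ := by
    intro i
    have key : (starRingEnd ℂ) (u i).1 * x + (starRingEnd ℂ) (u i).2 * y
        = (p i * ζ + q i) * (starRingEnd ℂ) Z := by
      have hxZ : (Z.re : ℂ) = (Z + (starRingEnd ℂ) Z) / 2 := by
        rw [Complex.add_conj]; push_cast; ring
      have hyZ : (Z.im : ℂ) = -I * (Z - (starRingEnd ℂ) Z) / 2 := by
        rw [Complex.sub_conj]; push_cast
        linear_combination ((Z.im : ℂ)) * Complex.I_mul_I
      rw [hx, hy, hxZ, hyZ, ← hZ2, hp, hq]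
      simp only []
      linear_combination (-(((starRingEnd ℂ) (u i).1 - I * (starRingEnd ℂ) (u i).2) / 2 * Z)) * hZZ
    rw [key, norm_mul, RCLike.norm_conj, hZn, mul_one]
  -- per-factor lower bounds
  have hFb : ∀ i, min (1/2) (‖ζ - w i‖^2/4) ≤ ‖p i * ζ + q i‖^2 := by
    intro i
    exact factor_sq_bound (p i) (q i) ζ (w i) (hpq i) hζn (by rw [hw])
  have hD2 : ∀ i, ‖ζ - w i‖ ≤ 2 := by
    intro i
    calc ‖ζ - w i‖ ≤ ‖ζ‖ + ‖w i‖ := norm_sub_le _ _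
      _ = 2 := by rw [hζn, hwn i]; norm_num
  have hFnn : ∀ i, (0:ℝ) ≤ ‖p i * ζ + q i‖ := fun i => norm_nonneg _
  -- the product lower bound (squared form): 1 ≤ ((∏ F) * (2√k)^k)
  set a : ℝ := (2 * Real.sqrt k) ^ k with ha
  have hk0 : (0:ℝ) < k := by exact_mod_cast hk
  have hsq : Real.sqrt k * Real.sqrt k = k := Real.mul_self_sqrt (le_of_lt hk0)
  have ha0 : 0 < a := by
    rw [ha]
    have : 0 < Real.sqrt k := Real.sqrt_pos.mpr hk0
    positivity
  have ha2 : a ^ 2 = (4 * k) ^ k := by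
    rw [ha, ← pow_mul, mul_comm k 2, pow_mul]
    congr 1
    rw [mul_pow, sq, sq, hsq]
    ring
  have hprodF : 1 ≤ (∏ i, ‖p i * ζ + q i‖) * a := by
    have hFprodnn : (0:ℝ) ≤ ∏ i, ‖p i * ζ + q i‖ := Finset.prod_nonneg fun i _ => hFnn i
    have hkey2 : 1 ≤ ((∏ i, ‖p i * ζ + q i‖) * a) ^ 2 := by
      rw [mul_pow, ha2, ← Finset.prod_pow]
      rcases eq_or_lt_of_le hk with hk1 | hk2
      · -- k = 1
        have hk1' : k = 1 := hk1.symm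
        subst hk1'
        rw [Fin.prod_univ_one]
        have hD : 1 ≤ ‖ζ - w 0‖ := by
          have := hζprod
          rwa [Fin.prod_univ_one] at this
        have hb := hFb 0
        have hmin : (1:ℝ)/4 ≤ min (1/2) (‖ζ - w 0‖^2/4) := by
          refine le_min (by norm_num) ?_
          nlinarith
        have h4 : ((4:ℝ) * ((1:ℕ):ℝ)) ^ 1 = 4 := by norm_num
        rw [h4]
        linarith [hb, hmin]
      · -- 2 ≤ k
        have h8 : ∀ i, ‖ζ - w i‖^2 / 8 ≤ ‖p i * ζ + q i‖^2 := by
          intro i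
          refine le_trans (le_min ?_ ?_) (hFb i)
          · nlinarith [hD2 i, norm_nonneg (ζ - w i)]
          · nlinarith [sq_nonneg ‖ζ - w i‖]
        have hstep : ∏ i, (‖ζ - w i‖^2 / 8) ≤ ∏ i, ‖p i * ζ + q i‖^2 :=
          Finset.prod_le_prod (fun i _ => by positivity) (fun i _ => h8 i)
        have hleft : (1:ℝ) / 8 ^ k ≤ ∏ i, (‖ζ - w i‖^2 / 8) := by
          rw [Finset.prod_div_distrib, Finset.prod_const, Finset.prod_pow,
            Finset.card_univ, Fintype.card_fin]
          have h1 : (1:ℝ) ≤ (∏ i, ‖ζ - w i‖) ^ 2 := by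
            have := pow_le_pow_left₀ (by norm_num : (0:ℝ) ≤ 1) hζprod 2
            simpa using this
          gcongr
        have hpow : (8:ℝ) ^ k ≤ (4 * k) ^ k := by
          refine pow_le_pow_left₀ (by norm_num) ?_ k
          have : (2:ℝ) ≤ k := by exact_mod_cast hk2
          linarith
        have h80 : (0:ℝ) < 8 ^ k := by positivity
        have h4k0 : (0:ℝ) < (4 * k) ^ k := by positivity
        have hmid : (1:ℝ) / (4*k) ^ k ≤ (1:ℝ) / 8 ^ k :=
          one_div_le_one_div_of_le h80 hpow
        calc (1:ℝ) = (1 / (4*k)^k) * (4*k)^k := by field_simp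
          _ ≤ (∏ i, ‖p i * ζ + q i‖^2) * (4*k)^k := by
              refine mul_le_mul_of_nonneg_right ?_ (le_of_lt h4k0)
              exact le_trans (le_trans hmid hleft) hstep
    exact one_le_of_sq' (mul_nonneg hFprodnn ha0.le) hkey2
  -- membership of the evaluation at the chosen point
  have hrS : ‖MvPolynomial.eval ![x, y] g‖ ∈ S := ⟨x, y, hxy, rfl⟩
  have hrval : ‖MvPolynomial.eval ![x, y] g‖ = ‖g₀‖ * ∏ i, ‖p i * ζ + q i‖ := by
    rw [heval x y, norm_mul, norm_prod]
    congr 1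
    exact Finset.prod_congr rfl fun i _ => hfeq i
  have hle1 : ‖g₀‖ ≤ ‖MvPolynomial.eval ![x, y] g‖ * a := by
    rw [hrval, mul_assoc]
    calc ‖g₀‖ = ‖g₀‖ * 1 := (mul_one _).symm
      _ ≤ ‖g₀‖ * ((∏ i, ‖p i * ζ + q i‖) * a) :=
          mul_le_mul_of_nonneg_left hprodF (norm_nonneg _)
  have hle2 : ‖MvPolynomial.eval ![x, y] g‖ ≤ sSup S := le_csSup hbdd hrS
  rw [hsm]
  calc ‖g₀‖ ≤ ‖MvPolynomial.eval ![x, y] g‖ * a := hle1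
    _ ≤ sSup S * a := mul_le_mul_of_nonneg_right hle2 (le_of_lt ha0)
end

section
/- For any homogeneous polynomials g and Q in two complex variables of degrees k and m respectively (k, m ≥ 1), one has ‖gQ‖_max ≥ (1/(2√(k+m)))^{k+m} · ‖g‖_max · ‖Q‖_max. -/
open MvPolynomial

namespace SMAux
open Finset Complex ComplexConjugate

/-- evaluation of a coefficient vector as a binary form of degree n -/
noncomputable def EV (c : ℕ → ℂ) (n : ℕ) (x y : ℂ) : ℂ :=
  ∑ j ∈ range (n+1), c j * x ^ j * y ^ (n - j)

/-- Fischer (Bombieri) unnormalized square norm -/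
noncomputable def FW (c : ℕ → ℂ) (n : ℕ) : ℝ :=
  ∑ j ∈ range (n+1), ((j.factorial * (n-j).factorial : ℕ) : ℝ) * normSq (c j)

/-- coefficients of (a x + b y) * (form with coeffs c) -/
def step (a b : ℂ) (c : ℕ → ℂ) : ℕ → ℂ :=
  fun j => a * (if j = 0 then 0 else c (j-1)) + b * c j

noncomputable def iter (a b : ℕ → ℂ) (C : ℂ) : ℕ → (ℕ → ℂ)
  | 0 => fun j => if j = 0 then C else 0
  | (t+1) => step (a t) (b t) (iter a b C t)

lemma step_vanish (a b : ℂ) (c : ℕ → ℂ) (t : ℕ) (hc : ∀ j, t < j → c j = 0) :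
    ∀ j, t + 1 < j → step a b c j = 0 := by
  intro j hj
  have h1 : c j = 0 := hc j (by omega)
  have h2 : (if j = 0 then (0:ℂ) else c (j-1)) = 0 := by
    rw [if_neg (by omega)]
    exact hc _ (by omega)
  simp [step, h1, h2]

lemma ev_step (a b : ℂ) (c : ℕ → ℂ) (t : ℕ) (hc : c (t+1) = 0) (x y : ℂ) :
    EV (step a b c) (t+1) x y = (a*x + b*y) * EV c t x y := by
  have expand : EV (step a b c) (t+1) x y
      = (∑ j ∈ range (t+1+1), a * ((if j = 0 then 0 else c (j-1)) * x ^ j * y ^ (t+1-j)))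
      + (∑ j ∈ range (t+1+1), b * (c j * x ^ j * y ^ (t+1-j))) := by
    rw [← Finset.sum_add_distrib]
    exact Finset.sum_congr rfl fun j _ => by simp only [step]; ring
  have h1 : (∑ j ∈ range (t+1+1), a * ((if j = 0 then 0 else c (j-1)) * x ^ j * y ^ (t+1-j)))
      = a * x * EV c t x y := by
    rw [Finset.sum_range_succ']
    simp only [Nat.succ_sub_succ, Nat.add_sub_cancel, if_neg (Nat.succ_ne_zero _),
      reduceIte, mul_zero, zero_mul, add_zero, Nat.sub_zero]
    rw [EV, Finset.mul_sum]
    exact Finset.sum_congr rfl fun i _ => by ring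
  have h2 : (∑ j ∈ range (t+1+1), b * (c j * x ^ j * y ^ (t+1-j)))
      = b * y * EV c t x y := by
    rw [Finset.sum_range_succ, hc]
    simp only [mul_zero, zero_mul, add_zero]
    rw [EV, Finset.mul_sum]
    refine Finset.sum_congr rfl fun j hj => ?_
    have hj' : j ≤ t := by simpa using Nat.lt_succ_iff.mp (Finset.mem_range.mp hj)
    have : t + 1 - j = (t - j) + 1 := by omega
    rw [this]
    ring
  rw [expand, h1, h2]; ring

lemma fact_id (s : ℕ) : (s+1).factorial = s.factorial + (s-1).factorial * s^2 := by
  cases s with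
  | zero => rfl
  | succ r =>
      simp only [Nat.factorial_succ, Nat.add_sub_cancel]
      ring

lemma fw_step (a b : ℂ) (c : ℕ → ℂ) (t : ℕ) (hc : c (t+1) = 0) :
    FW (step a b c) (t+1) =
      (normSq a + normSq b) * FW c t
      + ∑ i ∈ range t, ((i.factorial * (t-1-i).factorial : ℕ) : ℝ) *
          normSq ((starRingEnd ℂ) a * ((i+1 : ℕ) : ℂ) * c (i+1)
                  + (starRingEnd ℂ) b * ((t - i : ℕ) : ℂ) * c i) := by
  have LHS : FW (step a b c) (t+1)
      = normSq a * (∑ j ∈ range (t+1+1), ((j.factorial * (t+1-j).factorial : ℕ):ℝ) *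
            normSq (if j = 0 then 0 else c (j-1)))
      + normSq b * (∑ j ∈ range (t+1+1), ((j.factorial * (t+1-j).factorial : ℕ):ℝ) *
            normSq (c j))
      + 2 * (∑ j ∈ range (t+1+1), ((j.factorial * (t+1-j).factorial : ℕ):ℝ) *
            ((a * (if j = 0 then 0 else c (j-1))) * conj (b * c j)).re) := by
    rw [FW, Finset.mul_sum, Finset.mul_sum, Finset.mul_sum, ← Finset.sum_add_distrib,
      ← Finset.sum_add_distrib]
    refine Finset.sum_congr rfl fun j _ => ?_
    simp only [step, normSq_apply, Complex.mul_re, Complex.mul_im, Complex.add_re,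
      Complex.add_im, Complex.conj_re, Complex.conj_im]
    ring
  have hS1 : (∑ j ∈ range (t+1+1), ((j.factorial * (t+1-j).factorial : ℕ):ℝ) *
        normSq (if j = 0 then 0 else c (j-1)))
      = ∑ i ∈ range (t+1), (((i+1).factorial * (t-i).factorial : ℕ):ℝ) * normSq (c i) := by
    rw [Finset.sum_range_succ']
    simp only [Nat.succ_sub_succ, Nat.add_sub_cancel, if_neg (Nat.succ_ne_zero _),
      reduceIte, normSq_zero, mul_zero, add_zero, Nat.sub_zero]
  have hS2 : (∑ j ∈ range (t+1+1), ((j.factorial * (t+1-j).factorial : ℕ):ℝ) * normSq (c j))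
      = ∑ j ∈ range (t+1), ((j.factorial * (t+1-j).factorial : ℕ):ℝ) * normSq (c j) := by
    rw [Finset.sum_range_succ, hc]
    simp
  have hS3 : (∑ j ∈ range (t+1+1), ((j.factorial * (t+1-j).factorial : ℕ):ℝ) *
        ((a * (if j = 0 then 0 else c (j-1))) * conj (b * c j)).re)
      = ∑ i ∈ range t, (((i+1).factorial * (t-i).factorial : ℕ):ℝ) *
          ((a * c i) * conj (b * c (i+1))).re := by
    rw [Finset.sum_range_succ']
    simp only [Nat.succ_sub_succ, Nat.add_sub_cancel, if_neg (Nat.succ_ne_zero _),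
      reduceIte, Nat.sub_zero, mul_zero, zero_mul, map_zero, add_zero, Complex.zero_re]
    rw [Finset.sum_range_succ, hc]
    simp
  have hRem : (∑ i ∈ range t, ((i.factorial * (t-1-i).factorial : ℕ) : ℝ) *
          normSq ((starRingEnd ℂ) a * ((i+1 : ℕ) : ℂ) * c (i+1)
                  + (starRingEnd ℂ) b * ((t - i : ℕ) : ℂ) * c i))
      = normSq a * (∑ i ∈ range t, ((i.factorial * (t-1-i).factorial * (i+1)^2 : ℕ):ℝ) *
            normSq (c (i+1)))
      + normSq b * (∑ i ∈ range t, ((i.factorial * (t-1-i).factorial * (t-i)^2 : ℕ):ℝ) *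
            normSq (c i))
      + 2 * (∑ i ∈ range t, (((i+1).factorial * (t-i).factorial : ℕ):ℝ) *
            ((a * c i) * conj (b * c (i+1))).re) := by
    rw [Finset.mul_sum, Finset.mul_sum, Finset.mul_sum, ← Finset.sum_add_distrib,
      ← Finset.sum_add_distrib]
    refine Finset.sum_congr rfl fun i hi => ?_
    have hit : i < t := Finset.mem_range.mp hi
    have hs : t - i = (t-1-i) + 1 := by omega
    rw [hs, show (i+1).factorial = (i+1) * i.factorial from Nat.factorial_succ i,
      show ((t-1-i)+1).factorial = ((t-1-i)+1) * (t-1-i).factorial from Nat.factorial_succ _]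
    push_cast
    simp only [normSq_apply, Complex.mul_re, Complex.mul_im, Complex.add_re, Complex.add_im,
      Complex.conj_re, Complex.conj_im, Complex.natCast_re, Complex.natCast_im,
      Complex.add_im, Complex.one_re, Complex.one_im]
    ring
  have hA : (∑ i ∈ range (t+1), (((i+1).factorial * (t-i).factorial : ℕ):ℝ) * normSq (c i))
      = FW c t + ∑ i ∈ range t, ((i.factorial * (t-1-i).factorial * (i+1)^2 : ℕ):ℝ) *
          normSq (c (i+1)) := by
    have e1 : (∑ i ∈ range t, ((i.factorial * (t-1-i).factorial * (i+1)^2 : ℕ):ℝ) *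
          normSq (c (i+1)))
        = ∑ j ∈ range (t+1), (((j-1).factorial * (t-j).factorial * j^2 : ℕ):ℝ) *
            normSq (c j) := by
      rw [Finset.sum_range_succ']
      simp only [Nat.add_sub_cancel, Nat.succ_sub_succ, Nat.sub_zero, ne_eq, OfNat.ofNat_ne_zero,
        not_false_eq_true, zero_pow, mul_zero, Nat.cast_zero, zero_mul, add_zero]
      refine Finset.sum_congr rfl fun i hi => ?_
      have : t - (i+1) = t - 1 - i := by omega
      rw [this]
    rw [e1, FW, ← Finset.sum_add_distrib]
    refine Finset.sum_congr rfl fun j hj => ?_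
    rw [← add_mul]
    congr 1
    have : (j+1).factorial * (t-j).factorial
        = j.factorial * (t-j).factorial + (j-1).factorial * (t-j).factorial * j^2 := by
      rw [fact_id j]; ring
    exact_mod_cast this
  have hB : (∑ j ∈ range (t+1), ((j.factorial * (t+1-j).factorial : ℕ):ℝ) * normSq (c j))
      = FW c t + ∑ i ∈ range t, ((i.factorial * (t-1-i).factorial * (t-i)^2 : ℕ):ℝ) *
          normSq (c i) := by
    have e2 : (∑ i ∈ range t, ((i.factorial * (t-1-i).factorial * (t-i)^2 : ℕ):ℝ) *
          normSq (c i))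
        = ∑ i ∈ range (t+1), ((i.factorial * (t-1-i).factorial * (t-i)^2 : ℕ):ℝ) *
            normSq (c i) := by
      rw [Finset.sum_range_succ]
      simp
    rw [e2, FW, ← Finset.sum_add_distrib]
    refine Finset.sum_congr rfl fun j hj => ?_
    have hjt : j < t + 1 := Finset.mem_range.mp hj
    rw [← add_mul]
    congr 1
    have : j.factorial * (t+1-j).factorial
        = j.factorial * (t-j).factorial + j.factorial * (t-1-j).factorial * (t-j)^2 := by
      rw [show t+1-j = (t-j)+1 from by omega, fact_id (t-j),
        show (t-j)-1 = t-1-j from by omega]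
      ring
    exact_mod_cast this
  rw [LHS, hS1, hS2, hS3, hRem, hA, hB]
  ring

lemma iter_vanish (a b : ℕ → ℂ) (C : ℂ) (t : ℕ) : ∀ j, t < j → iter a b C t j = 0 := by
  induction t with
  | zero => intro j hj; simp [iter]; omega
  | succ t ih => exact step_vanish _ _ _ t ih

lemma ev_iter (a b : ℕ → ℂ) (C : ℂ) (t : ℕ) (x y : ℂ) :
    EV (iter a b C t) t x y = C * ∏ i ∈ range t, (a i * x + b i * y) := by
  induction t with
  | zero => simp [iter, EV]
  | succ t ih =>
      rw [show iter a b C (t+1) = step (a t) (b t) (iter a b C t) from rfl,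
        ev_step _ _ _ _ (iter_vanish a b C t _ (by omega)), ih, prod_range_succ]
      ring

lemma fw_iter (a b : ℕ → ℂ) (C : ℂ) (hu : ∀ i, normSq (a i) + normSq (b i) = 1)
    (t : ℕ) : normSq C ≤ FW (iter a b C t) t := by
  induction t with
  | zero => simp [iter, FW]
  | succ t ih =>
      have h := fw_step (a t) (b t) (iter a b C t) t (iter_vanish a b C t _ (by omega))
      rw [show iter a b C (t+1) = step (a t) (b t) (iter a b C t) from rfl, h, hu t]
      have : 0 ≤ ∑ i ∈ range t, ((i.factorial * (t-1-i).factorial : ℕ) : ℝ) *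
          normSq ((starRingEnd ℂ) (a t) * ((i+1 : ℕ) : ℂ) * (iter a b C t) (i+1)
                  + (starRingEnd ℂ) (b t) * ((t - i : ℕ) : ℂ) * (iter a b C t) i) :=
        Finset.sum_nonneg fun i _ => mul_nonneg (Nat.cast_nonneg _) (normSq_nonneg _)
      linarith

lemma ev_inj (c c' : ℕ → ℂ) (n : ℕ) (h : ∀ x y : ℂ, EV c n x y = EV c' n x y) :
    ∀ j ∈ range (n+1), c j = c' j := by
  have key : ∀ γ : ℕ → ℂ, ∀ x : ℂ,
      Polynomial.eval x (∑ j ∈ range (n+1), Polynomial.monomial j (γ j)) = EV γ n x 1 := by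
    intro γ x
    rw [Polynomial.eval_finset_sum, EV]
    exact Finset.sum_congr rfl fun j _ => by simp [Polynomial.eval_monomial]
  have hpq : (∑ j ∈ range (n+1), Polynomial.monomial j (c j))
      = ∑ j ∈ range (n+1), Polynomial.monomial j (c' j) := by
    apply Polynomial.funext
    intro x
    rw [key, key, h]
  intro j hj
  have := congrArg (fun q => Polynomial.coeff q j) hpq
  simpa [Polynomial.finset_sum_coeff, Polynomial.coeff_monomial,
    Finset.sum_ite_eq' (range (n+1)) j, hj] using this

/-- the monomial exponent vector (j, n-j) -/
noncomputable def mono (n j : ℕ) : Fin 2 →₀ ℕ := Finsupp.single 0 j + Finsupp.single 1 (n-j)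

lemma mono_apply0 (n j : ℕ) : mono n j 0 = j := by simp [mono]
lemma mono_apply1 (n j : ℕ) : mono n j 1 = n - j := by
  simp [mono, Finsupp.single_apply]

lemma bridge (p : MvPolynomial (Fin 2) ℂ) (n : ℕ) (hp : p.IsHomogeneous n) :
    ∀ x y : ℂ, eval ![x,y] p = EV (fun j => coeff (mono n j) p) n x y := by
  intro x y
  have hdeg : ∀ d ∈ p.support, d 0 + d 1 = n := by
    intro d hd
    have h1 := hp (MvPolynomial.mem_support_iff.mp hd)
    have h2 : (Finsupp.weight (1 : Fin 2 → ℕ)) d = ∑ i ∈ d.support, d i := by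
      rw [Finsupp.weight_apply, Finsupp.sum]
      exact Finset.sum_congr rfl fun i _ => by simp
    have h3 : (∑ i ∈ d.support, d i) = ∑ i : Fin 2, d i :=
      Finset.sum_subset (Finset.subset_univ _)
        (fun i _ hi => Finsupp.notMem_support_iff.mp hi)
    have h4 := h1
    rw [h2, h3, Fin.sum_univ_two] at h4
    exact h4
  have hrep : ∀ d ∈ p.support, d = mono n (d 0) := by
    intro d hd
    have := hdeg d hd
    ext i
    fin_cases i
    · show d 0 = mono n (d 0) 0
      rw [mono_apply0]
    · show d 1 = mono n (d 0) 1
      rw [mono_apply1]; omega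
  have hsub : p.support ⊆ (range (n+1)).image (mono n) := by
    intro d hd
    refine Finset.mem_image.mpr ⟨d 0, Finset.mem_range.mpr ?_, (hrep d hd).symm⟩
    have := hdeg d hd; omega
  have hinj : ∀ j ∈ range (n+1), ∀ j' ∈ range (n+1), mono n j = mono n j' → j = j' := by
    intro j _ j' _ hjj
    have := congrArg (fun d => d 0) hjj
    simpa [mono_apply0] using this
  rw [MvPolynomial.eval_eq']
  have step1 : (∑ d ∈ p.support, coeff d p * ∏ i, (![x,y]) i ^ d i)
      = ∑ d ∈ (range (n+1)).image (mono n), coeff d p * ∏ i, (![x,y]) i ^ d i := by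
    refine Finset.sum_subset hsub fun d _ hd => ?_
    rw [MvPolynomial.notMem_support_iff.mp hd, zero_mul]
  rw [step1, Finset.sum_image hinj, EV]
  refine Finset.sum_congr rfl fun j hj => ?_
  rw [Fin.prod_univ_two]
  simp [mono_apply0, mono_apply1, mul_assoc]

lemma list_prod_eq (g : ℂ → ℂ) (L : List ℂ) :
    (L.map g).prod = ∏ i ∈ range L.length, g (L.getD i 0) := by
  induction L with
  | nil => simp
  | cons a L ih =>
      rw [List.map_cons, List.prod_cons, ih, List.length_cons, Finset.prod_range_succ']
      simp [mul_comm]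

lemma factor (c : ℕ → ℂ) (n : ℕ) (hne : ∃ x y : ℂ, EV c n x y ≠ 0) :
    ∃ (C : ℂ) (a b : ℕ → ℂ), C ≠ 0 ∧ (∀ i, normSq (a i) + normSq (b i) = 1) ∧
      ∀ x y : ℂ, EV c n x y = C * ∏ i ∈ range n, (a i * x + b i * y) := by
  classical
  set f : Polynomial ℂ := ∑ j ∈ range (n+1), Polynomial.monomial j (c j) with hfdef
  have hcoeff : ∀ m : ℕ, f.coeff m = if m ∈ range (n+1) then c m else 0 := by
    intro m
    rw [hfdef, Polynomial.finset_sum_coeff]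
    simp [Polynomial.coeff_monomial, Finset.sum_ite_eq' (range (n+1)) m]
  have heval : ∀ z : ℂ, f.eval z = ∑ j ∈ range (n+1), c j * z ^ j := by
    intro z
    rw [hfdef, Polynomial.eval_finset_sum]
    exact Finset.sum_congr rfl fun j _ => by simp [Polynomial.eval_monomial]
  have hf : f ≠ 0 := by
    intro h0
    obtain ⟨x, y, hxy⟩ := hne
    apply hxy
    rw [EV]
    refine Finset.sum_eq_zero fun j hj => ?_
    have : c j = 0 := by
      have h1 := hcoeff j
      rw [h0, if_pos hj] at h1
      simpa using h1.symm
    rw [this, zero_mul, zero_mul]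
  have hd : f.natDegree ≤ n := by
    rw [Polynomial.natDegree_le_iff_coeff_eq_zero]
    intro m hm
    rw [hcoeff m, if_neg (by simp; omega)]
  set d := f.natDegree with hddef
  have hsplits : f.Splits := IsAlgClosed.splits f
  have hcard : f.roots.card = d := (Polynomial.splits_iff_card_roots.mp hsplits)
  set L : List ℂ := f.roots.toList with hLdef
  have hlen : L.length = d := by rw [hLdef, Multiset.length_toList, hcard]
  set r : ℕ → ℂ := fun i => L.getD i 0 with hrdef
  set s : ℕ → ℝ := fun i => Real.sqrt (1 + normSq (r i)) with hsdef
  have hspos : ∀ i, 0 < s i := fun i =>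
    Real.sqrt_pos.mpr (by linarith [normSq_nonneg (r i)])
  have hssq : ∀ i, s i ^ 2 = 1 + normSq (r i) := fun i =>
    Real.sq_sqrt (by linarith [normSq_nonneg (r i)])
  set a : ℕ → ℂ := fun i => if i < d then (((s i)⁻¹ : ℝ) : ℂ) else 0 with hadef
  set b : ℕ → ℂ := fun i => if i < d then -(r i) * (((s i)⁻¹ : ℝ) : ℂ) else 1 with hbdef
  set C : ℂ := (∏ i ∈ range d, ((s i : ℝ) : ℂ)) * f.leadingCoeff with hCdef
  have hlead : f.leadingCoeff ≠ 0 := Polynomial.leadingCoeff_ne_zero.mpr hf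
  refine ⟨C, a, b, ?_, ?_, ?_⟩
  · refine mul_ne_zero (Finset.prod_ne_zero_iff.mpr fun i _ => ?_) hlead
    exact Complex.ofReal_ne_zero.mpr (ne_of_gt (hspos i))
  · intro i
    by_cases hi : i < d
    · rw [hadef, hbdef]
      simp only [if_pos hi]
      rw [normSq_mul, normSq_neg, Complex.normSq_ofReal]
      have h1 : (s i)⁻¹ * (s i)⁻¹ = (1 + normSq (r i))⁻¹ := by
        rw [← mul_inv]
        congr 1
        have h2 := hssq i
        nlinarith [hspos i]
      rw [h1]
      have h3 : (1 : ℝ) + normSq (r i) ≠ 0 := by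
        have := normSq_nonneg (r i); linarith
      field_simp
    · rw [hadef, hbdef]
      simp only [if_neg hi]
      simp
  · intro x y
    have hmain : EV c n x y
        = f.leadingCoeff * (∏ i ∈ range d, (x - r i * y)) * y ^ (n - d) := by
      by_cases hy : y = 0
      · subst hy
        have hLHS : EV c n x 0 = c n * x ^ n := by
          rw [EV, Finset.sum_eq_single_of_mem n (Finset.self_mem_range_succ n)]
          · simp
          · intro j hj hjn
            have hjlt : j < n := by have := Finset.mem_range.mp hj; omega
            rw [zero_pow (by omega : n - j ≠ 0), mul_zero]
        rw [hLHS]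
        rcases eq_or_lt_of_le hd with hdn | hdn
        · rw [← hdn] at *
          rw [Nat.sub_self, pow_zero, mul_one]
          have hcn : c d = f.leadingCoeff := by
            have h1 := hcoeff d
            rw [if_pos (by simpa using Nat.lt_succ_of_le hd)] at h1
            rw [← h1]
            rfl
          rw [hcn]
          simp [Finset.prod_const, Finset.card_range]
        · have hcn : c n = 0 := by
            have h1 := hcoeff n
            rw [if_pos (Finset.self_mem_range_succ n)] at h1
            rw [← h1]
            exact Polynomial.coeff_eq_zero_of_natDegree_lt hdn
          rw [hcn, zero_mul, zero_pow (by omega : n - d ≠ 0), mul_zero]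
      · have key1 : f.eval (x/y) = f.leadingCoeff * ∏ i ∈ range d, (x/y - r i) := by
          conv_lhs => rw [hsplits.eq_prod_roots]
          rw [Polynomial.eval_mul, Polynomial.eval_C, Polynomial.eval_multiset_prod,
            Multiset.map_map]
          congr 1
          have hL : f.roots = (L : Multiset ℂ) := (Multiset.coe_toList _).symm
          rw [hL, Multiset.map_coe, Multiset.prod_coe, list_prod_eq
            ((fun z => Polynomial.eval (x/y) z) ∘ fun a => Polynomial.X - Polynomial.C a), hlen]
          exact Finset.prod_congr rfl fun i _ => by simp [hrdef, List.getD]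
        have key2 : EV c n x y = y ^ n * f.eval (x/y) := by
          rw [heval, EV, Finset.mul_sum]
          refine Finset.sum_congr rfl fun j hj => ?_
          have hjn : j ≤ n := by have := Finset.mem_range.mp hj; omega
          have hyj : y ^ n = y ^ j * y ^ (n - j) := by rw [← pow_add]; congr 1; omega
          rw [div_pow, hyj]
          field_simp
        rw [key2, key1]
        rw [show y ^ n = y ^ d * y ^ (n - d) from by rw [← pow_add]; congr 1; omega]
        have hcomb : (∏ i ∈ range d, (x - r i * y))
            = y ^ d * ∏ i ∈ range d, (x/y - r i) := by
          calc (∏ i ∈ range d, (x - r i * y))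
              = ∏ i ∈ range d, (y * (x/y - r i)) := by
                refine Finset.prod_congr rfl fun i _ => ?_
                rw [mul_sub, mul_div_cancel₀ _ hy]
                ring
            _ = (∏ _i ∈ range d, y) * ∏ i ∈ range d, (x/y - r i) :=
                Finset.prod_mul_distrib
            _ = y ^ d * ∏ i ∈ range d, (x/y - r i) := by
                rw [Finset.prod_const, Finset.card_range]
        rw [hcomb]
        ring
    have hprod : (∏ i ∈ range n, (a i * x + b i * y))
        = (∏ i ∈ range d, ((((s i)⁻¹ : ℝ) : ℂ) * (x - r i * y))) * y ^ (n - d) := by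
      have hsplit : (∏ i ∈ range n, (a i * x + b i * y))
          = (∏ i ∈ range d, (a i * x + b i * y))
            * ∏ i ∈ range (n - d), (a (d + i) * x + b (d + i) * y) := by
        conv_lhs => rw [show n = d + (n - d) from by omega]
        exact Finset.prod_range_add _ d (n - d)
      rw [hsplit]
      congr 1
      · refine Finset.prod_congr rfl fun i hi => ?_
        have hid : i < d := Finset.mem_range.mp hi
        rw [hadef, hbdef]
        simp only [if_pos hid]
        ring
      · have : ∀ i, a (d + i) * x + b (d + i) * y = y := by
          intro i
          rw [hadef, hbdef]
          simp only [if_neg (by omega : ¬ d + i < d)]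
          ring
        rw [Finset.prod_congr rfl fun i _ => this i, Finset.prod_const, Finset.card_range]
    rw [hmain, hprod, hCdef]
    have hcomb2 : (∏ i ∈ range d, ((s i : ℝ) : ℂ))
        * (∏ i ∈ range d, ((((s i)⁻¹ : ℝ) : ℂ) * (x - r i * y)))
        = ∏ i ∈ range d, (x - r i * y) := by
      rw [← Finset.prod_mul_distrib]
      refine Finset.prod_congr rfl fun i _ => ?_
      rw [← mul_assoc, ← Complex.ofReal_mul, mul_inv_cancel₀ (ne_of_gt (hspos i)),
        Complex.ofReal_one, one_mul]
    rw [← hcomb2]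
    ring

lemma FW_congr {c c' : ℕ → ℂ} {n : ℕ} (h : ∀ j ∈ range (n+1), c j = c' j) :
    FW c n = FW c' n := by
  unfold FW
  exact Finset.sum_congr rfl fun j hj => by rw [h j hj]

lemma coeff_bound (c : ℕ → ℂ) (n : ℕ) (M : ℝ)
    (h : ∀ x y : ℂ, ‖x‖^2 + ‖y‖^2 = 1 → ‖EV c n x y‖ ≤ M) :
    ∀ j ∈ range (n+1), ‖c j‖ ≤ Real.sqrt 2 ^ n * M := by
  intro j hj
  have hjn : j ≤ n := Nat.lt_succ_iff.mp (Finset.mem_range.mp hj)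
  set N := n + 1 with hNdef
  have hN : N ≠ 0 := Nat.succ_ne_zero n
  set ω : ℂ := Complex.exp (2 * Real.pi * Complex.I / N) with hw
  have hprim : IsPrimitiveRoot ω N := Complex.isPrimitiveRoot_exp N hN
  have hwnorm : ‖ω‖ = 1 := Complex.norm_eq_one_of_pow_eq_one hprim.pow_eq_one hN
  set u : ℂ := (((Real.sqrt 2)⁻¹ : ℝ) : ℂ) with hu
  have hs2 : (0:ℝ) < Real.sqrt 2 := Real.sqrt_pos.mpr (by norm_num)
  have hunorm : ‖u‖ = (Real.sqrt 2)⁻¹ := by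
    rw [hu, Complex.norm_real]
    exact _root_.abs_of_nonneg (by positivity)
  have hsphere : ∀ s : ℕ, ‖ω^s * u‖^2 + ‖u‖^2 = 1 := by
    intro s
    rw [norm_mul, norm_pow, hwnorm, one_pow, one_mul, hunorm]
    rw [← Real.sqrt_inv]
    rw [Real.sq_sqrt (by norm_num)]
    norm_num
  have key : ∑ s ∈ range N, ω^(s*(N - j)) * EV c n (ω^s * u) u = (N : ℂ) * (c j * u^n) := by
    have expand : ∀ s, ω^(s*(N-j)) * EV c n (ω^s * u) u
        = ∑ i ∈ range N, ω^(s*(N-j+i)) * (c i * u^n) := by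
      intro s
      rw [EV, Finset.mul_sum]
      refine Finset.sum_congr rfl fun i hi => ?_
      have hin : i ≤ n := Nat.lt_succ_iff.mp (Finset.mem_range.mp hi)
      have hus : u^i * u^(n-i) = u^n := by rw [← pow_add]; congr 1; omega
      rw [mul_pow, ← pow_mul,
        show s*(N-j+i) = s*(N-j) + s*i from by ring, pow_add, ← hus]
      ring
    rw [Finset.sum_congr rfl (fun s _ => expand s), Finset.sum_comm]
    have inner : ∀ i ∈ range N, (∑ s ∈ range N, ω^(s*(N-j+i)) * (c i * u^n))
        = (if i = j then (N:ℂ) else 0) * (c i * u^n) := by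
      intro i hi
      have hiN : i < N := Finset.mem_range.mp hi
      have hjN : j < N := by omega
      rw [← Finset.sum_mul]
      congr 1
      rw [Finset.sum_congr rfl fun s _ =>
        show ω^(s*(N-j+i)) = (ω^(N-j+i))^s from by rw [← pow_mul, Nat.mul_comm]]
      by_cases hij : i = j
      · subst hij
        rw [if_pos rfl, show N - i + i = N from by omega, hprim.pow_eq_one]
        simp
      · rw [if_neg hij]
        have hz : ω^(N-j+i) ≠ 1 := by
          by_cases hlt : N - j + i < N
          · exact hprim.pow_ne_one_of_pos_of_lt (by omega) hlt
          · have heq : ω^(N-j+i) = ω^(N-j+i-N) * ω^N := by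
              rw [← pow_add]; congr 1; omega
            rw [heq, hprim.pow_eq_one, mul_one]
            exact hprim.pow_ne_one_of_pos_of_lt (by omega) (by omega)
        rw [geom_sum_eq hz]
        rw [show (ω^(N-j+i))^N = (ω^N)^(N-j+i) from by rw [← pow_mul, ← pow_mul, Nat.mul_comm],
          hprim.pow_eq_one, one_pow, sub_self, zero_div]
    rw [Finset.sum_congr rfl inner,
      Finset.sum_eq_single_of_mem j (by rw [hNdef]; exact hj)
        (fun i _ hij => by rw [if_neg hij, zero_mul]),
      if_pos rfl]
  have hupow : ‖u^n‖ = ((Real.sqrt 2)⁻¹)^n := by rw [norm_pow, hunorm]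
  have hbound : (N:ℝ) * (‖c j‖ * ((Real.sqrt 2)⁻¹)^n) ≤ (N:ℝ) * M := by
    have e1 : (N:ℝ) * (‖c j‖ * ((Real.sqrt 2)⁻¹)^n) = ‖(N : ℂ) * (c j * u^n)‖ := by
      rw [norm_mul, norm_mul, hupow, Complex.norm_natCast]
    rw [e1, ← key]
    calc ‖∑ s ∈ range N, ω^(s*(N - j)) * EV c n (ω^s * u) u‖
        ≤ ∑ s ∈ range N, ‖ω^(s*(N - j)) * EV c n (ω^s * u) u‖ := norm_sum_le _ _
      _ ≤ ∑ _s ∈ range N, M := by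
          refine Finset.sum_le_sum fun s _ => ?_
          rw [norm_mul, norm_pow, hwnorm, one_pow, one_mul]
          exact h _ _ (hsphere s)
      _ = (N:ℝ) * M := by rw [Finset.sum_const, Finset.card_range, nsmul_eq_mul]
  have hNpos : (0:ℝ) < N := by positivity
  have h2 : ‖c j‖ * ((Real.sqrt 2)⁻¹)^n ≤ M := le_of_mul_le_mul_left hbound hNpos
  have h3 : ‖c j‖ = (‖c j‖ * ((Real.sqrt 2)⁻¹)^n) * (Real.sqrt 2)^n := by
    rw [mul_assoc, ← mul_pow, inv_mul_cancel₀ (ne_of_gt hs2), one_pow, mul_one]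
  rw [h3]
  calc (‖c j‖ * ((Real.sqrt 2)⁻¹)^n) * (Real.sqrt 2)^n
      ≤ M * (Real.sqrt 2)^n := by
        refine mul_le_mul_of_nonneg_right h2 (by positivity)
    _ = Real.sqrt 2 ^ n * M := by ring

lemma normSq_eq_norm_sq (z : ℂ) : normSq z = ‖z‖^2 := by
  rw [Complex.sq_norm]

lemma unit_le_one (a b x y : ℂ) (hab : normSq a + normSq b = 1)
    (hxy : ‖x‖^2 + ‖y‖^2 = 1) : ‖a*x + b*y‖ ≤ 1 := by
  have h1 : ‖a*x + b*y‖ ≤ ‖a‖*‖x‖ + ‖b‖*‖y‖ :=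
    (norm_add_le _ _).trans (by rw [norm_mul, norm_mul])
  rw [normSq_eq_norm_sq, normSq_eq_norm_sq] at hab
  nlinarith [sq_nonneg (‖a‖*‖y‖ - ‖b‖*‖x‖), norm_nonneg a, norm_nonneg b,
    norm_nonneg x, norm_nonneg y, h1, norm_nonneg (a*x+b*y)]

lemma sphere_nonempty (p : MvPolynomial (Fin 2) ℂ) :
    Set.Nonempty {r : ℝ | ∃ x y : ℂ, ‖x‖ ^ 2 + ‖y‖ ^ 2 = 1 ∧ r = ‖MvPolynomial.eval ![x, y] p‖} :=
  ⟨‖MvPolynomial.eval ![(1:ℂ), 0] p‖, 1, 0, by norm_num, rfl⟩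

lemma sphere_bdd (p : MvPolynomial (Fin 2) ℂ) :
    BddAbove {r : ℝ | ∃ x y : ℂ, ‖x‖ ^ 2 + ‖y‖ ^ 2 = 1 ∧ r = ‖MvPolynomial.eval ![x, y] p‖} := by
  refine ⟨∑ d ∈ p.support, ‖coeff d p‖, ?_⟩
  rintro r ⟨x, y, hxy, rfl⟩
  have hx : ‖x‖ ≤ 1 := by nlinarith [norm_nonneg x, norm_nonneg y, sq_nonneg ‖y‖]
  have hy : ‖y‖ ≤ 1 := by nlinarith [norm_nonneg x, norm_nonneg y, sq_nonneg ‖x‖]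
  rw [MvPolynomial.eval_eq']
  have h1 : ‖∑ d ∈ p.support, coeff d p * ∏ i, (![x,y]) i ^ d i‖
      ≤ ∑ d ∈ p.support, ‖coeff d p * ∏ i, (![x,y]) i ^ d i‖ := norm_sum_le _ _
  refine le_trans h1 ?_
  refine Finset.sum_le_sum fun d _ => ?_
  rw [norm_mul]
  refine mul_le_of_le_one_right (norm_nonneg _) ?_
  rw [norm_prod]
  refine Finset.prod_le_one (fun i _ => norm_nonneg _) fun i _ => ?_
  rw [norm_pow]
  refine pow_le_one₀ (norm_nonneg _) ?_
  fin_cases i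
  · simpa using hx
  · simpa using hy

lemma le_sphereMax (p : MvPolynomial (Fin 2) ℂ) (x y : ℂ) (hxy : ‖x‖^2 + ‖y‖^2 = 1) :
    ‖MvPolynomial.eval ![x, y] p‖ ≤ sphereMax p :=
  le_csSup (sphere_bdd p) ⟨x, y, hxy, rfl⟩

lemma sphereMax_nonneg (p : MvPolynomial (Fin 2) ℂ) : 0 ≤ sphereMax p :=
  le_trans (norm_nonneg _) (le_sphereMax p 1 0 (by norm_num))

lemma sphereMax_le (p : MvPolynomial (Fin 2) ℂ) (B : ℝ)
    (hB : ∀ x y : ℂ, ‖x‖^2 + ‖y‖^2 = 1 → ‖MvPolynomial.eval ![x, y] p‖ ≤ B) :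
    sphereMax p ≤ B := by
  refine csSup_le (sphere_nonempty p) ?_
  rintro r ⟨x, y, hxy, rfl⟩
  exact hB x y hxy

lemma fact_ineq : ∀ n : ℕ, 2 ≤ n → (n+1).factorial ≤ 2^n * n^n := by
  intro n hn
  induction n, hn using Nat.le_induction with
  | base => decide
  | succ n hn ih =>
      calc (n+2).factorial = (n+2) * (n+1).factorial := Nat.factorial_succ _
        _ ≤ (n+2) * (2^n * n^n) := Nat.mul_le_mul_left _ ih
        _ ≤ (2*(n+1)) * (2^n * (n+1)^n) := by
            refine Nat.mul_le_mul (by omega) (Nat.mul_le_mul_left _ ?_)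
            exact Nat.pow_le_pow_left (by omega) n
        _ = 2^(n+1) * (n+1)^(n+1) := by ring

end SMAux

open SMAux Finset in
/-- For homogeneous `g, Q` of degrees `k, m ≥ 1`:
`‖gQ‖_max ≥ (1/(2√(k+m)))^(k+m) ‖g‖_max ‖Q‖_max`. -/
theorem stmt7 (k m : ℕ) (hk : 1 ≤ k) (hm : 1 ≤ m)
    (g Q : MvPolynomial (Fin 2) ℂ)
    (hg : g.IsHomogeneous k) (hQ : Q.IsHomogeneous m) :
    sphereMax (g * Q) ≥
      (1 / (2 * Real.sqrt (k + m))) ^ (k + m) * sphereMax g * sphereMax Q := by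
  classical
  have hzero : sphereMax (0 : MvPolynomial (Fin 2) ℂ) = 0 :=
    le_antisymm (SMAux.sphereMax_le _ 0 fun x y _ => by simp) (SMAux.sphereMax_nonneg _)
  by_cases hg0 : g = 0
  · rw [hg0, zero_mul, hzero, mul_zero, zero_mul]
  by_cases hQ0 : Q = 0
  · rw [hQ0, mul_zero, hzero, mul_zero]
  have hbg := SMAux.bridge g k hg
  have hbQ := SMAux.bridge Q m hQ
  have hgne : ∃ x y : ℂ, EV (fun j => MvPolynomial.coeff (mono k j) g) k x y ≠ 0 := by
    by_contra hcon
    push_neg at hcon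
    apply hg0
    apply MvPolynomial.funext
    intro v
    have hv : ![v 0, v 1] = v := by
      funext i; fin_cases i <;> rfl
    rw [map_zero, ← hv, hbg (v 0) (v 1), hcon]
  have hQne : ∃ x y : ℂ, EV (fun j => MvPolynomial.coeff (mono m j) Q) m x y ≠ 0 := by
    by_contra hcon
    push_neg at hcon
    apply hQ0
    apply MvPolynomial.funext
    intro v
    have hv : ![v 0, v 1] = v := by
      funext i; fin_cases i <;> rfl
    rw [map_zero, ← hv, hbQ (v 0) (v 1), hcon]
  obtain ⟨C₁, a₁, b₁, hC₁, hu₁, hfac₁⟩ := SMAux.factor _ k hgne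
  obtain ⟨C₂, a₂, b₂, hC₂, hu₂, hfac₂⟩ := SMAux.factor _ m hQne
  have hgle : sphereMax g ≤ ‖C₁‖ := by
    refine SMAux.sphereMax_le g ‖C₁‖ fun x y hxy => ?_
    rw [hbg x y, hfac₁ x y, norm_mul]
    refine mul_le_of_le_one_right (norm_nonneg _) ?_
    rw [norm_prod]
    exact Finset.prod_le_one (fun i _ => norm_nonneg _)
      (fun i _ => SMAux.unit_le_one _ _ _ _ (hu₁ i) hxy)
  have hQle : sphereMax Q ≤ ‖C₂‖ := by
    refine SMAux.sphereMax_le Q ‖C₂‖ fun x y hxy => ?_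
    rw [hbQ x y, hfac₂ x y, norm_mul]
    refine mul_le_of_le_one_right (norm_nonneg _) ?_
    rw [norm_prod]
    exact Finset.prod_le_one (fun i _ => norm_nonneg _)
      (fun i _ => SMAux.unit_le_one _ _ _ _ (hu₂ i) hxy)
  set A : ℕ → ℂ := fun i => if i < k then a₁ i else a₂ (i - k) with hA
  set B : ℕ → ℂ := fun i => if i < k then b₁ i else b₂ (i - k) with hB
  have hABu : ∀ i, Complex.normSq (A i) + Complex.normSq (B i) = 1 := by
    intro i
    by_cases hik : i < k
    · simp only [hA, hB, if_pos hik]; exact hu₁ i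
    · simp only [hA, hB, if_neg hik]; exact hu₂ (i - k)
  have hprodsplit : ∀ x y : ℂ, (∏ i ∈ Finset.range (k+m), (A i * x + B i * y))
      = (∏ i ∈ Finset.range k, (a₁ i * x + b₁ i * y))
        * ∏ i ∈ Finset.range m, (a₂ i * x + b₂ i * y) := by
    intro x y
    rw [Finset.prod_range_add]
    congr 1
    · exact Finset.prod_congr rfl fun i hi => by
        simp only [hA, hB, if_pos (Finset.mem_range.mp hi)]
    · refine Finset.prod_congr rfl fun i hi => ?_
      simp only [hA, hB, if_neg (by omega : ¬ k + i < k), Nat.add_sub_cancel_left]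
  have hev : ∀ x y : ℂ, EV (SMAux.iter A B (C₁*C₂) (k+m)) (k+m) x y
      = MvPolynomial.eval ![x,y] (g*Q) := by
    intro x y
    rw [SMAux.ev_iter, map_mul, hbg x y, hbQ x y, hfac₁ x y, hfac₂ x y, hprodsplit x y]
    ring
  have hbgq := SMAux.bridge (g*Q) (k+m) (hg.mul hQ)
  have hcc : ∀ j ∈ Finset.range (k+m+1),
      (fun j => MvPolynomial.coeff (mono (k+m) j) (g*Q)) j
        = SMAux.iter A B (C₁*C₂) (k+m) j :=
    SMAux.ev_inj _ _ (k+m) (fun x y => by rw [← hbgq x y, ← hev x y])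
  have hlow : Complex.normSq (C₁*C₂)
      ≤ FW (fun j => MvPolynomial.coeff (mono (k+m) j) (g*Q)) (k+m) := by
    rw [SMAux.FW_congr hcc]
    exact SMAux.fw_iter A B (C₁*C₂) hABu (k+m)
  have hM0 : 0 ≤ sphereMax (g*Q) := SMAux.sphereMax_nonneg _
  have hcb : ∀ j ∈ Finset.range (k+m+1),
      ‖MvPolynomial.coeff (mono (k+m) j) (g*Q)‖ ≤ Real.sqrt 2 ^ (k+m) * sphereMax (g*Q) :=
    SMAux.coeff_bound _ _ _ (fun x y hxy => by
      rw [← hbgq x y]; exact SMAux.le_sphereMax _ x y hxy)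
  have hs2sq : (Real.sqrt 2 ^ (k+m))^2 = 2^(k+m) := by
    rw [← pow_mul, mul_comm (k+m) 2, pow_mul, Real.sq_sqrt (by norm_num : (0:ℝ) ≤ 2)]
  have hFWub : FW (fun j => MvPolynomial.coeff (mono (k+m) j) (g*Q)) (k+m)
      ≤ (k+m+1) * (((k+m).factorial : ℝ) * (2^(k+m) * sphereMax (g*Q)^2)) := by
    unfold FW
    calc (∑ j ∈ Finset.range (k+m+1), (((j.factorial * (k+m-j).factorial : ℕ)) : ℝ) *
            Complex.normSq (MvPolynomial.coeff (mono (k+m) j) (g*Q)))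
        ≤ ∑ _j ∈ Finset.range (k+m+1),
            (((k+m).factorial : ℝ) * (2^(k+m) * sphereMax (g*Q)^2)) := by
          refine Finset.sum_le_sum fun j hj => ?_
          have hjn : j ≤ k+m := Nat.lt_succ_iff.mp (Finset.mem_range.mp hj)
          have hw : ((j.factorial * (k+m-j).factorial : ℕ) : ℝ) ≤ ((k+m).factorial : ℝ) := by
            exact_mod_cast Nat.le_of_dvd (Nat.factorial_pos _)
              (Nat.factorial_mul_factorial_dvd_factorial hjn)
          have hns : Complex.normSq (MvPolynomial.coeff (mono (k+m) j) (g*Q))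
              ≤ 2^(k+m) * sphereMax (g*Q)^2 := by
            rw [SMAux.normSq_eq_norm_sq]
            calc ‖MvPolynomial.coeff (mono (k+m) j) (g*Q)‖^2
                ≤ (Real.sqrt 2 ^ (k+m) * sphereMax (g*Q))^2 := by
                  refine pow_le_pow_left₀ (norm_nonneg _) (hcb j hj) 2
              _ = 2^(k+m) * sphereMax (g*Q)^2 := by rw [mul_pow, hs2sq]
          refine mul_le_mul hw hns (Complex.normSq_nonneg _) (Nat.cast_nonneg _)
      _ = (k+m+1) * (((k+m).factorial : ℝ) * (2^(k+m) * sphereMax (g*Q)^2)) := by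
          rw [Finset.sum_const, Finset.card_range, nsmul_eq_mul]
          push_cast
          ring
  -- final arithmetic
  have hfact : (((k+m)+1).factorial : ℝ) ≤ 2^(k+m) * (k+m : ℝ)^(k+m) := by
    have := SMAux.fact_ineq (k+m) (by omega)
    calc (((k+m)+1).factorial : ℝ) ≤ ((2^(k+m) * (k+m)^(k+m) : ℕ) : ℝ) := by exact_mod_cast this
      _ = 2^(k+m) * (k+m : ℝ)^(k+m) := by push_cast; ring
  have hP2 : (sphereMax g * sphereMax Q)^2
      ≤ (4*(k+m:ℝ))^(k+m) * sphereMax (g*Q)^2 := by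
    have h1 : (sphereMax g * sphereMax Q)^2 ≤ ‖C₁‖^2 * ‖C₂‖^2 := by
      rw [mul_pow]
      exact mul_le_mul (pow_le_pow_left₀ (SMAux.sphereMax_nonneg g) hgle 2)
        (pow_le_pow_left₀ (SMAux.sphereMax_nonneg Q) hQle 2)
        (pow_nonneg (SMAux.sphereMax_nonneg Q) 2) (pow_nonneg (norm_nonneg _) 2)
    have h2 : ‖C₁‖^2 * ‖C₂‖^2 = Complex.normSq (C₁*C₂) := by
      rw [Complex.normSq_mul, SMAux.normSq_eq_norm_sq, SMAux.normSq_eq_norm_sq]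
    have h3 : ((k+m+1) : ℝ) * (((k+m).factorial : ℝ) * (2^(k+m) * sphereMax (g*Q)^2))
        = (((k+m)+1).factorial : ℝ) * (2^(k+m) * sphereMax (g*Q)^2) := by
      rw [Nat.factorial_succ]
      push_cast
      ring
    have h4 : (((k+m)+1).factorial : ℝ) * (2^(k+m) * sphereMax (g*Q)^2)
        ≤ (2^(k+m) * (k+m:ℝ)^(k+m)) * (2^(k+m) * sphereMax (g*Q)^2) := by
      refine mul_le_mul_of_nonneg_right hfact (by positivity)
    calc (sphereMax g * sphereMax Q)^2 ≤ ‖C₁‖^2 * ‖C₂‖^2 := h1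
      _ = Complex.normSq (C₁*C₂) := h2
      _ ≤ (k+m+1) * (((k+m).factorial : ℝ) * (2^(k+m) * sphereMax (g*Q)^2)) :=
          le_trans hlow hFWub
      _ = (((k+m)+1).factorial : ℝ) * (2^(k+m) * sphereMax (g*Q)^2) := h3
      _ ≤ (2^(k+m) * (k+m:ℝ)^(k+m)) * (2^(k+m) * sphereMax (g*Q)^2) := h4
      _ = (4*(k+m:ℝ))^(k+m) * sphereMax (g*Q)^2 := by
          rw [mul_pow, show (4:ℝ)^(k+m) = 2^(k+m)*2^(k+m) from by
            rw [show (4:ℝ) = 2*2 from by norm_num, mul_pow]]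
          ring
  have hnmpos : (0:ℝ) < (k+m:ℝ) := by positivity
  have hcast : (k:ℝ) + m = ((k+m : ℕ) : ℝ) := by push_cast; ring
  have hrsq : ((1 / (2 * Real.sqrt ((k:ℝ) + m)))^(k+m))^2 = (1/(4*(k+m:ℝ)))^(k+m) := by
    rw [← pow_mul, mul_comm (k+m) 2, pow_mul]
    congr 1
    rw [div_pow, mul_pow, Real.sq_sqrt (by positivity : (0:ℝ) ≤ (k:ℝ)+m)]
    norm_num
  have hrP2 : ((1 / (2 * Real.sqrt ((k:ℝ) + m)))^(k+m) * (sphereMax g * sphereMax Q))^2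
      ≤ sphereMax (g*Q)^2 := by
    rw [mul_pow, hrsq]
    calc (1/(4*(k+m:ℝ)))^(k+m) * (sphereMax g * sphereMax Q)^2
        ≤ (1/(4*(k+m:ℝ)))^(k+m) * ((4*(k+m:ℝ))^(k+m) * sphereMax (g*Q)^2) := by
          refine mul_le_mul_of_nonneg_left hP2 (by positivity)
      _ = sphereMax (g*Q)^2 := by
          rw [← mul_assoc, ← mul_pow]
          field_simp
          rw [one_pow, one_mul]
  have hfinal : (1 / (2 * Real.sqrt ((k:ℝ) + m)))^(k+m) * (sphereMax g * sphereMax Q)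
      ≤ sphereMax (g*Q) := by
    have ha : 0 ≤ (1 / (2 * Real.sqrt ((k:ℝ) + m)))^(k+m) * (sphereMax g * sphereMax Q) := by
      have := SMAux.sphereMax_nonneg g
      have := SMAux.sphereMax_nonneg Q
      positivity
    rw [← Real.sqrt_sq ha, ← Real.sqrt_sq hM0]
    exact Real.sqrt_le_sqrt hrP2
  calc (1 / (2 * Real.sqrt ((k:ℝ) + m))) ^ (k + m) * sphereMax g * sphereMax Q
      = (1 / (2 * Real.sqrt ((k:ℝ) + m)))^(k+m) * (sphereMax g * sphereMax Q) := by ring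
    _ ≤ sphereMax (g*Q) := hfinal
end

section
/- Let h(x,y) = ∏_{i=0}^{n} ((x,y), v_i) be a homogeneous polynomial of degree n+1 ≥ 3 in two complex variables with ‖h‖_max = 1, where v_i = (v_{i,1}, v_{i,2}) ∈ ℂ². Define the discriminant Σ = ∏_{i<j} (v_{i,1} v_{j,2} − v_{i,2} v_{j,1})². Then |Σ| ≤ n^{6n²}. -/
open MvPolynomial

set_option maxHeartbeats 1000000

section Aux
open Complex ComplexConjugate Real

lemma lagrangeC (a b c d : ℂ) :
    normSq (a * conj c + b * conj d) + normSq (a * d - b * c) =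
    (normSq a + normSq b) * (normSq c + normSq d) := by
  simp only [normSq_apply, add_re, add_im, mul_re, mul_im, sub_re, sub_im,
    conj_re, conj_im]
  ring

lemma csC (a b c d : ℂ) :
    normSq (a * conj c + b * conj d) ≤ (normSq a + normSq b) * (normSq c + normSq d) := by
  have := lagrangeC a b c d
  nlinarith [normSq_nonneg (a * d - b * c)]

/-- Cramer-type identity: `D(a,b)·‖v‖² = H(a,v)H(b,w) − H(a,w)H(b,v)` with `w = v⊥`. -/
lemma cramerC (a1 a2 b1 b2 v1 v2 : ℂ) :
    (a1 * b2 - a2 * b1) * ((normSq v1 + normSq v2 : ℝ) : ℂ) =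
      (a1 * conj v1 + a2 * conj v2) * (b1 * conj (-conj v2) + b2 * conj (conj v1)) -
      (a1 * conj (-conj v2) + a2 * conj (conj v1)) * (b1 * conj v1 + b2 * conj v2) := by
  have h1 : ((normSq v1 : ℝ) : ℂ) = v1 * conj v1 := (Complex.mul_conj v1).symm
  have h2 : ((normSq v2 : ℝ) : ℂ) = v2 * conj v2 := (Complex.mul_conj v2).symm
  push_cast [h1, h2]
  simp only [map_neg, Complex.conj_conj]
  ring

/-- Key: if `a, b` are unit vectors then `|D(a,b)|²·‖v‖² ≤ 2(|H(a,v)|² + |H(b,v)|²)`. -/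
lemma keyC (a1 a2 b1 b2 v1 v2 : ℂ)
    (ha : normSq a1 + normSq a2 = 1) (hb : normSq b1 + normSq b2 = 1)
    (hv : 0 < normSq v1 + normSq v2) :
    normSq (a1 * b2 - a2 * b1) * (normSq v1 + normSq v2) ≤
      2 * (normSq (a1 * conj v1 + a2 * conj v2) + normSq (b1 * conj v1 + b2 * conj v2)) := by
  set nv : ℝ := normSq v1 + normSq v2 with hnv
  have e1 : ‖((a1 * b2 - a2 * b1) * ((nv : ℝ) : ℂ))‖ =
      ‖(a1 * b2 - a2 * b1)‖ * nv := by
    rw [norm_mul, Complex.norm_real, Real.norm_eq_abs, abs_of_pos hv]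
  have e2 := congrArg (fun z : ℂ => ‖z‖) (cramerC a1 a2 b1 b2 v1 v2)
  rw [e1] at e2
  -- triangle inequality on RHS
  have tri : ‖(a1 * b2 - a2 * b1)‖ * nv ≤
      ‖(a1 * conj v1 + a2 * conj v2)‖ *
        ‖(b1 * conj (-conj v2) + b2 * conj (conj v1))‖ +
      ‖(a1 * conj (-conj v2) + a2 * conj (conj v1))‖ *
        ‖(b1 * conj v1 + b2 * conj v2)‖ := by
    rw [e2]
    calc _ ≤ ‖((a1 * conj v1 + a2 * conj v2) *
          (b1 * conj (-conj v2) + b2 * conj (conj v1)))‖ +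
        ‖((a1 * conj (-conj v2) + a2 * conj (conj v1)) *
          (b1 * conj v1 + b2 * conj v2))‖ := norm_sub_le _ _
      _ = _ := by rw [norm_mul, norm_mul]
  -- squared Cauchy–Schwarz bounds on the cross terms
  have cs1 : normSq (b1 * conj (-conj v2) + b2 * conj (conj v1)) ≤ nv := by
    have := csC b1 b2 (-conj v2) (conj v1)
    rw [hb] at this
    simpa [Complex.normSq_conj, add_comm] using this
  have cs2 : normSq (a1 * conj (-conj v2) + a2 * conj (conj v1)) ≤ nv := by
    have := csC a1 a2 (-conj v2) (conj v1)
    rw [ha] at this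
    simpa [Complex.normSq_conj, add_comm] using this
  set X := ‖(a1 * conj v1 + a2 * conj v2)‖ with hX
  set Y := ‖(b1 * conj (-conj v2) + b2 * conj (conj v1))‖ with hY
  set Z := ‖(a1 * conj (-conj v2) + a2 * conj (conj v1))‖ with hZ
  set W := ‖(b1 * conj v1 + b2 * conj v2)‖ with hW
  set D := ‖(a1 * b2 - a2 * b1)‖ with hD
  have sqX : X ^ 2 = normSq (a1 * conj v1 + a2 * conj v2) := Complex.sq_norm _
  have sqY : Y ^ 2 = normSq (b1 * conj (-conj v2) + b2 * conj (conj v1)) := Complex.sq_norm _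
  have sqZ : Z ^ 2 = normSq (a1 * conj (-conj v2) + a2 * conj (conj v1)) := Complex.sq_norm _
  have sqW : W ^ 2 = normSq (b1 * conj v1 + b2 * conj v2) := Complex.sq_norm _
  have sqD : D ^ 2 = normSq (a1 * b2 - a2 * b1) := Complex.sq_norm _
  have hX0 : 0 ≤ X := norm_nonneg _
  have hY0 : 0 ≤ Y := norm_nonneg _
  have hZ0 : 0 ≤ Z := norm_nonneg _
  have hW0 : 0 ≤ W := norm_nonneg _
  have hD0 : 0 ≤ D := norm_nonneg _
  -- (D·nv)² ≤ (XY + ZW)² ≤ 2(X²Y² + Z²W²) ≤ 2·nv·(X² + W²)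
  have sq1 : (D * nv) ^ 2 ≤ 2 * (X ^ 2 * Y ^ 2 + Z ^ 2 * W ^ 2) := by
    nlinarith [tri, mul_nonneg hD0 hv.le, sq_nonneg (X * Y - Z * W), mul_nonneg (mul_nonneg hX0 hY0) (mul_nonneg hZ0 hW0)]
  have sq2 : X ^ 2 * Y ^ 2 ≤ X ^ 2 * nv := by
    apply mul_le_mul_of_nonneg_left (by rw [sqY]; exact cs1) (by positivity)
  have sq3 : Z ^ 2 * W ^ 2 ≤ nv * W ^ 2 := by
    apply mul_le_mul_of_nonneg_right (by rw [sqZ]; exact cs2) (by positivity)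
  have final : D ^ 2 * nv ^ 2 ≤ 2 * nv * (X ^ 2 + W ^ 2) := by nlinarith
  rw [← sqD, ← sqX, ← sqW]
  nlinarith [sq_nonneg D]

lemma sin_lb_aux (N e : ℝ) (hN : 0 < N) (he : 1 ≤ e) (h2 : 2 * e ≤ N) :
    2 / N ≤ Real.sin (π * e / N) := by
  have hx0 : 0 ≤ π * e / N := by positivity
  have hx2 : π * e / N ≤ π / 2 := by
    rw [div_le_div_iff₀ hN two_pos]
    nlinarith [Real.pi_pos]
  have h := Real.mul_le_sin hx0 hx2
  have heq : 2 / π * (π * e / N) = 2 * e / N := by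
    field_simp
  rw [heq] at h
  have : 2 / N ≤ 2 * e / N := by gcongr; linarith
  linarith

lemma sin_lb (N d : ℕ) (hN : 2 ≤ N) (h1 : 1 ≤ d) (hd : d < N) :
    2 / N ≤ Real.sin (π * d / N) := by
  have hN0 : (0:ℝ) < N := by positivity
  rcases le_or_gt (2 * (d:ℝ)) N with hc | hc
  · exact sin_lb_aux N d hN0 (by exact_mod_cast h1) hc
  · have e1 : (1:ℝ) ≤ (N:ℝ) - d := by
      have : d + 1 ≤ N := hd
      have : ((d:ℝ) + 1) ≤ N := by exact_mod_cast this
      linarith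
    have heq : Real.sin (π * d / N) = Real.sin (π * ((N:ℝ) - d) / N) := by
      rw [← Real.sin_pi_sub]
      congr 1
      field_simp
    rw [heq]
    exact sin_lb_aux N _ hN0 e1 (by linarith)

lemma exp_sep (θ : ℝ) : ‖(Complex.exp ((θ : ℝ) * I) - 1)‖ = 2 * |Real.sin (θ / 2)| := by
  have h : Complex.normSq (Complex.exp ((θ:ℝ) * I) - 1) = 2 - 2 * Real.cos θ := by
    rw [Complex.normSq_apply]
    simp [Complex.exp_ofReal_mul_I_re, Complex.exp_ofReal_mul_I_im]
    nlinarith [Real.sin_sq_add_cos_sq θ]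
  have h2 : 2 - 2 * Real.cos θ = 4 * Real.sin (θ / 2) ^ 2 := by
    have hc : Real.cos θ = 1 - 2 * Real.sin (θ/2) ^ 2 := by
      have h2 : Real.cos (2 * (θ/2)) = Real.cos (θ/2) ^ 2 - Real.sin (θ/2) ^ 2 :=
        Real.cos_two_mul' (θ/2)
      have h3 : 2 * (θ/2) = θ := by ring
      rw [h3] at h2
      nlinarith [Real.sin_sq_add_cos_sq (θ/2)]
    rw [hc]; ring
  have habs : ‖(Complex.exp ((θ:ℝ) * I) - 1)‖ ^ 2 = (2 * |Real.sin (θ/2)|) ^ 2 := by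
    rw [Complex.sq_norm, h, h2]
    rw [mul_pow, _root_.sq_abs]
    ring
  have h1 : 0 ≤ ‖(Complex.exp ((θ:ℝ) * I) - 1)‖ := norm_nonneg _
  have h3 : 0 ≤ 2 * |Real.sin (θ/2)| := by positivity
  nlinarith

lemma pts_sep (N : ℕ) (hN : 2 ≤ N) (k l : ℕ) (hkl : k < l) (hl : l < N) :
    4 / N ≤ ‖(Complex.exp ((2 * π * l / N : ℝ) * I) -
      Complex.exp ((2 * π * k / N : ℝ) * I))‖ := by
  have hN0 : ((N:ℝ)) ≠ 0 := by positivity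
  set d := l - k with hd
  have hd1 : 1 ≤ d := by omega
  have hdN : d < N := by omega
  have hcast : ((d:ℕ):ℝ) = (l:ℝ) - k := by
    rw [hd, Nat.cast_sub hkl.le]
  have hfac : Complex.exp ((2*π*l/N:ℝ)*I) - Complex.exp ((2*π*k/N:ℝ)*I)
      = Complex.exp ((2*π*k/N:ℝ)*I) * (Complex.exp ((2*π*d/N:ℝ)*I) - 1) := by
    have hre : (2*π*k/N : ℝ) + (2*π*d/N : ℝ) = (2*π*l/N : ℝ) := by
      rw [hcast]; field_simp; ring
    rw [mul_sub, mul_one, ← Complex.exp_add, ← add_mul, ← Complex.ofReal_add, hre]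
  rw [hfac, norm_mul, Complex.norm_exp_ofReal_mul_I, one_mul, exp_sep]
  have harg : 2*π*(d:ℝ)/N / 2 = π * d / N := by ring
  rw [harg]
  have hs := sin_lb N d hN hd1 hdN
  have hNpos : (0:ℝ) < N := by positivity
  have hpos : 0 < Real.sin (π * d / N) := lt_of_lt_of_le (by positivity) hs
  rw [abs_of_pos hpos]
  have h4 : (4:ℝ)/N = 2 * (2/N) := by ring
  rw [h4]
  linarith

lemma prod_pairs {m : ℕ} (f : Fin (m + 1) → ℝ) (hf : ∀ i, 0 ≤ f i) :
    ∏ p ∈ Finset.univ.filter (fun p : Fin (m + 1) × Fin (m + 1) => p.1 < p.2),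
      (f p.1 * f p.2) = (∏ i, f i) ^ m := by
  classical
  set g : Fin (m+1) × Fin (m+1) → ℝ := fun p => f p.1 * f p.2 with hg
  set A := Finset.univ.filter (fun p : Fin (m+1) × Fin (m+1) => p.1 < p.2) with hA
  set B := Finset.univ.filter (fun p : Fin (m+1) × Fin (m+1) => p.2 < p.1) with hB
  rcases em (∃ i, f i = 0) with ⟨i0, hi0⟩ | hpos
  · -- some factor is zero
    rcases Nat.eq_zero_or_pos m with hm | hm
    · subst hm
      have : A = ∅ := by
        rw [hA]; ext p
        simp only [Finset.mem_filter, Finset.mem_univ, true_and, Finset.notMem_empty,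
          iff_false]
        omega
      simp [this]
    · have hrhs : (∏ i, f i) ^ m = 0 := by
        rw [Finset.prod_eq_zero (Finset.mem_univ i0) hi0]
        simp [Nat.pos_iff_ne_zero.mp hm]
      rw [hrhs]
      -- find a pair containing i0
      obtain ⟨j, hj⟩ : ∃ j : Fin (m+1), j ≠ i0 := by
        have : Nontrivial (Fin (m + 1)) := Fin.nontrivial_iff_two_le.mpr (by omega)
        exact exists_ne i0
      rcases lt_or_gt_of_ne hj with hlt | hgt
      · exact Finset.prod_eq_zero (i := (j, i0)) (by simp [hA, hlt]) (by simp [hg, hi0])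
      · exact Finset.prod_eq_zero (i := (i0, j)) (by simp [hA, hgt]) (by simp [hg, hi0])
  · push_neg at hpos
    have hfpos : ∀ i, 0 < f i := fun i => (hf i).lt_of_ne (Ne.symm (hpos i))
    set T := ∏ i, f i with hT
    have hTpos : 0 < T := Finset.prod_pos (fun i _ => hfpos i)
    have hswap : ∏ p ∈ B, g p = ∏ p ∈ A, g p := by
      apply Finset.prod_nbij' (fun p => Prod.swap p) (fun p => Prod.swap p)
      · intro a ha; simp [hA, hB] at *; exact ha
      · intro a ha; simp [hA, hB] at *; exact ha
      · intro a _; simp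
      · intro a _; simp
      · intro a _; simp [hg]; ring
    have hdisj : Disjoint A B := by
      rw [hA, hB, Finset.disjoint_filter]
      intro p _ hp
      exact lt_asymm hp
    have hunion : A ∪ B = Finset.univ.filter (fun p : Fin (m+1) × Fin (m+1) => p.1 ≠ p.2) := by
      rw [hA, hB, ← Finset.filter_or]
      apply Finset.filter_congr
      intro p _
      exact ne_iff_lt_or_gt.symm
    have hsq : (∏ p ∈ A, g p) ^ 2 =
        ∏ p ∈ Finset.univ.filter (fun p : Fin (m+1) × Fin (m+1) => p.1 ≠ p.2), g p := by
      rw [sq]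
      nth_rewrite 2 [← hswap]
      rw [← Finset.prod_union hdisj, hunion]
    have hC : ∏ p ∈ Finset.univ.filter (fun p : Fin (m+1) × Fin (m+1) => p.1 ≠ p.2), g p
        = T ^ (2 * m) := by
      rw [Finset.prod_filter, Fintype.prod_prod_type]
      have inner : ∀ i : Fin (m+1),
          (∏ j, if (i, j).1 ≠ (i, j).2 then g (i, j) else 1) = f i ^ m * (T / f i) := by
        intro i
        have e1 : (∏ j, if (i, j).1 ≠ (i, j).2 then g (i, j) else 1)
            = ∏ j ∈ Finset.univ.filter (fun j => i ≠ j), (f i * f j) := by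
          rw [Finset.prod_filter]
        rw [e1, Finset.filter_ne, Finset.prod_mul_distrib, Finset.prod_const,
          Finset.card_erase_of_mem (Finset.mem_univ i), Finset.card_univ,
          Fintype.card_fin]
        congr 1
        rw [eq_div_iff (hfpos i).ne', mul_comm, Finset.mul_prod_erase _ _ (Finset.mem_univ i)]
      rw [Finset.prod_congr rfl (fun i _ => inner i), Finset.prod_mul_distrib,
        Finset.prod_pow, Finset.prod_div_distrib, Finset.prod_const, Finset.card_univ,
        Fintype.card_fin, ← hT]
      rw [pow_succ, mul_div_assoc, div_self hTpos.ne', mul_one, ← pow_add, two_mul]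
    have hPQ : (∏ p ∈ A, g p) ^ 2 = (T ^ m) ^ 2 := by
      rw [hsq, hC, ← pow_mul, mul_comm m 2]
    have hP0 : 0 ≤ ∏ p ∈ A, g p :=
      Finset.prod_nonneg (fun p _ => mul_nonneg (hf _) (hf _))
    have habs := (sq_eq_sq_iff_abs_eq_abs _ _).mp hPQ
    rwa [_root_.abs_of_nonneg hP0, _root_.abs_of_nonneg (by positivity : (0:ℝ) ≤ T ^ m)] at habs

end Aux

open Complex ComplexConjugate in
/-- For `h(x,y) = ∏ᵢ ((x,y), vᵢ)` homogeneous of degree `n+1 ≥ 3` with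
`‖h‖_max = 1`, the discriminant `Σ = ∏_{i<j} (v_{i,1}v_{j,2} − v_{i,2}v_{j,1})²`
satisfies `|Σ| ≤ n^(6n²)`. -/
theorem stmt11 (n : ℕ) (hn : 2 ≤ n) (v : Fin (n + 1) → ℂ × ℂ)
    (h : MvPolynomial (Fin 2) ℂ)
    (hh : h = ∏ i, (C ((starRingEnd ℂ) (v i).1) * X 0 +
      C ((starRingEnd ℂ) (v i).2) * X 1))
    (hmax : sphereMax h = 1) :
    ‖∏ p ∈ Finset.univ.filter (fun p : Fin (n + 1) × Fin (n + 1) => p.1 < p.2),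
        ((v p.1).1 * (v p.2).2 - (v p.1).2 * (v p.2).1) ^ 2‖ ≤
      (n : ℝ) ^ (6 * n ^ 2) := by
  classical
  set nsV : Fin (n + 1) → ℝ := fun i => normSq (v i).1 + normSq (v i).2 with hnsV
  have hnsV0 : ∀ i, 0 ≤ nsV i := fun i => add_nonneg (normSq_nonneg _) (normSq_nonneg _)
  -- The sphere points
  set x0 : ℂ := (((Real.sqrt 2)⁻¹ : ℝ) : ℂ) with hx0
  have hns_x0 : normSq x0 = 2⁻¹ := by
    rw [hx0, normSq_ofReal, ← mul_inv, Real.mul_self_sqrt (by norm_num)]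
  set t : Fin (n + 2) → ℂ := fun k => Complex.exp ((2 * Real.pi * k / (n + 2) : ℝ) * I) with ht
  have hns_t : ∀ k, normSq (t k) = 1 := by
    intro k
    rw [ht]
    rw [← Complex.sq_norm, Complex.norm_exp_ofReal_mul_I, one_pow]
  have hunit : ∀ k, normSq x0 + normSq (t k * x0) = 1 := by
    intro k
    rw [normSq_mul, hns_t, one_mul, hns_x0]
    norm_num
  -- evaluation of h at the sphere points
  have heval : ∀ k, MvPolynomial.eval ![x0, t k * x0] h =
      ∏ i, (x0 * conj (v i).1 + (t k * x0) * conj (v i).2) := by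
    intro k
    rw [hh, map_prod]
    apply Finset.prod_congr rfl
    intro i _
    simp [Matrix.cons_val_zero, Matrix.cons_val_one, Matrix.head_cons]
    ring
  set H : Fin (n + 2) → Fin (n + 1) → ℂ :=
    fun k i => x0 * conj (v i).1 + (t k * x0) * conj (v i).2 with hHdef
  set c : ℝ := ((n : ℝ) + 2)⁻¹ with hc
  have hcpos : 0 < c := by rw [hc]; positivity
  -- separation of the sphere points
  have hsep : ∀ k l : Fin (n + 2), k ≠ l → 4 * c ^ 2 ≤ normSq (x0 * (t l * x0) - t k * x0 * x0) := by
    intro k l hkl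
    have habs : 4 / ((n : ℝ) + 2) ≤ ‖(t l - t k)‖ := by
      rcases lt_or_gt_of_ne hkl with hlt | hgt
      · have := pts_sep (n + 2) (by omega) k l hlt l.isLt
        push_cast at this
        convert this using 2
        rw [ht]
        push_cast
        ring_nf
      · have := pts_sep (n + 2) (by omega) l k hgt k.isLt
        push_cast at this
        rw [show ‖t l - t k‖ = ‖t k - t l‖ from norm_sub_rev _ _]
        convert this using 2
        rw [ht]
        push_cast
        ring_nf
    have hfac : x0 * (t l * x0) - t k * x0 * x0 = x0 ^ 2 * (t l - t k) := by ring
    rw [hfac, normSq_mul, ← Complex.sq_norm (t l - t k)]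
    have hx2 : normSq (x0 ^ 2) = 4⁻¹ := by
      rw [pow_two, normSq_mul, hns_x0]; norm_num
    rw [hx2]
    have h1 : (4 / ((n:ℝ) + 2)) ^ 2 ≤ ‖(t l - t k)‖ ^ 2 := by
      apply pow_le_pow_left₀ (by positivity) habs
    have h2 : (4 / ((n:ℝ)+2)) ^ 2 = 16 * c ^ 2 := by
      rw [hc, div_pow, inv_pow, div_eq_mul_inv]; norm_num
    nlinarith
  -- pigeonhole: a good sphere point exists
  have hgood : ∃ k : Fin (n + 2), ∀ i, c ^ 2 * nsV i ≤ normSq (H k i) := by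
    by_contra hcon
    push_neg at hcon
    choose g hg using hcon
    obtain ⟨k, l, hkl, hgkl⟩ := Fintype.exists_ne_map_eq_of_card_lt g (by simp)
    have hbk : normSq (H k (g k)) < c ^ 2 * nsV (g k) := hg k
    have hbl : normSq (H l (g k)) < c ^ 2 * nsV (g k) := by rw [hgkl]; exact hg l
    have hvpos : 0 < nsV (g k) := by
      by_contra hv
      push_neg at hv
      have : nsV (g k) = 0 := le_antisymm hv (hnsV0 (g k))
      rw [this, mul_zero] at hbk
      exact absurd hbk (not_lt.mpr (normSq_nonneg _))
    have hkey := keyC x0 (t k * x0) x0 (t l * x0) (v (g k)).1 (v (g k)).2 (hunit k) (hunit l) hvpos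
    have hsep' := hsep k l hkl
    rw [hHdef] at hbk hbl
    simp only at hbk hbl
    rw [show normSq (v (g k)).1 + normSq (v (g k)).2 = nsV (g k) from rfl] at hkey
    nlinarith [mul_le_mul_of_nonneg_right hsep' hvpos.le]
  obtain ⟨k, hk⟩ := hgood
  -- the evaluation at the good point lies in the sphere-max set and is ≤ 1
  have hBdd : BddAbove {r : ℝ | ∃ x y : ℂ, ‖x‖ ^ 2 + ‖y‖ ^ 2 = 1 ∧
      r = ‖MvPolynomial.eval ![x, y] h‖} := by
    refine ⟨∏ i, (‖(v i).1‖ + ‖(v i).2‖), ?_⟩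
    rintro r ⟨x, y, hxy, rfl⟩
    have hx1 : ‖x‖ ≤ 1 := by nlinarith [norm_nonneg x, norm_nonneg y, sq_nonneg ‖y‖, sq_nonneg ‖x‖]
    have hy1 : ‖y‖ ≤ 1 := by nlinarith [norm_nonneg x, norm_nonneg y, sq_nonneg ‖y‖, sq_nonneg ‖x‖]
    rw [hh, map_prod, norm_prod]
    apply Finset.prod_le_prod (fun i _ => norm_nonneg _)
    intro i _
    have he : MvPolynomial.eval ![x, y] (C (conj (v i).1) * X 0 + C (conj (v i).2) * X 1)
        = conj (v i).1 * x + conj (v i).2 * y := by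
      simp [Matrix.cons_val_zero, Matrix.cons_val_one, Matrix.head_cons]
    rw [he]
    calc ‖conj (v i).1 * x + conj (v i).2 * y‖
        ≤ ‖conj (v i).1 * x‖ + ‖conj (v i).2 * y‖ := norm_add_le _ _
      _ = ‖(v i).1‖ * ‖x‖ + ‖(v i).2‖ * ‖y‖ := by
          rw [norm_mul, norm_mul, RCLike.norm_conj, RCLike.norm_conj]
      _ ≤ ‖(v i).1‖ * 1 + ‖(v i).2‖ * 1 :=
          add_le_add (mul_le_mul_of_nonneg_left hx1 (norm_nonneg _))
            (mul_le_mul_of_nonneg_left hy1 (norm_nonneg _))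
      _ = ‖(v i).1‖ + ‖(v i).2‖ := by
          rw [mul_one, mul_one]
  have hmem : ‖MvPolynomial.eval ![x0, t k * x0] h‖ ∈ {r : ℝ | ∃ x y : ℂ,
      ‖x‖ ^ 2 + ‖y‖ ^ 2 = 1 ∧ r = ‖MvPolynomial.eval ![x, y] h‖} := by
    refine ⟨x0, t k * x0, ?_, rfl⟩
    rw [Complex.sq_norm, Complex.sq_norm]
    exact hunit k
  have hle1 : ‖MvPolynomial.eval ![x0, t k * x0] h‖ ≤ 1 := by
    have h1 : ‖MvPolynomial.eval ![x0, t k * x0] h‖ ≤ sphereMax h := le_csSup hBdd hmem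
    rwa [hmax] at h1
  -- product of the |H k i|² is ≤ 1
  have hprodH : ∏ i, normSq (H k i) ≤ 1 := by
    have e : ∏ i, normSq (H k i) = normSq (MvPolynomial.eval ![x0, t k * x0] h) := by
      rw [heval k, map_prod normSq]
    rw [e, Complex.normSq_eq_norm_sq]
    nlinarith [norm_nonneg (MvPolynomial.eval ![x0, t k * x0] h)]
  -- lower bound via the good point
  have hlow : ∏ i, (c ^ 2 * nsV i) ≤ ∏ i, normSq (H k i) :=
    Finset.prod_le_prod (fun i _ => mul_nonneg (by positivity) (hnsV0 i)) (fun i _ => hk i)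
  have hprodV : ∏ i, nsV i ≤ ((n : ℝ) + 2) ^ (2 * (n + 1)) := by
    have e : ∏ i, (c ^ 2 * nsV i) = c ^ (2 * (n + 1)) * ∏ i, nsV i := by
      rw [Finset.prod_mul_distrib, Finset.prod_const, Finset.card_univ, Fintype.card_fin,
        ← pow_mul]
    have hle : c ^ (2 * (n + 1)) * ∏ i, nsV i ≤ 1 := by
      rw [← e]; exact hlow.trans hprodH
    have hcpow : ((n : ℝ) + 2) ^ (2 * (n + 1)) * c ^ (2 * (n + 1)) = 1 := by
      rw [hc, ← mul_pow, mul_inv_cancel₀ (by positivity), one_pow]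
    calc ∏ i, nsV i = (((n : ℝ) + 2) ^ (2 * (n + 1)) * c ^ (2 * (n + 1))) * ∏ i, nsV i := by
          rw [hcpow, one_mul]
      _ = ((n : ℝ) + 2) ^ (2 * (n + 1)) * (c ^ (2 * (n + 1)) * ∏ i, nsV i) := by ring
      _ ≤ ((n : ℝ) + 2) ^ (2 * (n + 1)) * 1 := by
          apply mul_le_mul_of_nonneg_left hle (by positivity)
      _ = ((n : ℝ) + 2) ^ (2 * (n + 1)) := mul_one _
  -- bound the discriminant by the product of the nsV
  have hdisc : ‖∏ p ∈ Finset.univ.filter (fun p : Fin (n + 1) × Fin (n + 1) => p.1 < p.2),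
      ((v p.1).1 * (v p.2).2 - (v p.1).2 * (v p.2).1) ^ 2‖ ≤ (∏ i, nsV i) ^ n := by
    rw [norm_prod]
    have e : ∀ p : Fin (n + 1) × Fin (n + 1),
        ‖((v p.1).1 * (v p.2).2 - (v p.1).2 * (v p.2).1) ^ 2‖
          = normSq ((v p.1).1 * (v p.2).2 - (v p.1).2 * (v p.2).1) := by
      intro p
      rw [norm_pow, Complex.sq_norm]
    rw [Finset.prod_congr rfl (fun p _ => e p)]
    have hb : ∀ p : Fin (n + 1) × Fin (n + 1),
        normSq ((v p.1).1 * (v p.2).2 - (v p.1).2 * (v p.2).1) ≤ nsV p.1 * nsV p.2 := by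
      intro p
      have hl := lagrangeC (v p.1).1 (v p.1).2 (v p.2).1 (v p.2).2
      rw [show (normSq (v p.1).1 + normSq (v p.1).2) * (normSq (v p.2).1 + normSq (v p.2).2)
        = nsV p.1 * nsV p.2 from rfl] at hl
      linarith [normSq_nonneg ((v p.1).1 * conj (v p.2).1 + (v p.1).2 * conj (v p.2).2)]
    calc ∏ p ∈ Finset.univ.filter (fun p : Fin (n + 1) × Fin (n + 1) => p.1 < p.2),
          normSq ((v p.1).1 * (v p.2).2 - (v p.1).2 * (v p.2).1)
        ≤ ∏ p ∈ Finset.univ.filter (fun p : Fin (n + 1) × Fin (n + 1) => p.1 < p.2),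
          (nsV p.1 * nsV p.2) :=
          Finset.prod_le_prod (fun p _ => normSq_nonneg _) (fun p _ => hb p)
      _ = (∏ i, nsV i) ^ n := prod_pairs nsV hnsV0
  -- final numerics
  have hnat : ((n : ℕ) + 2) ^ (2 * (n + 1) * n) ≤ n ^ (6 * n ^ 2) := by
    calc (n + 2) ^ (2 * (n + 1) * n) ≤ (n ^ 2) ^ (2 * (n + 1) * n) :=
          Nat.pow_le_pow_left (by nlinarith) _
      _ = n ^ (2 * (2 * (n + 1) * n)) := by rw [← pow_mul]
      _ ≤ n ^ (6 * n ^ 2) := Nat.pow_le_pow_right (by omega) (by nlinarith)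
  calc ‖∏ p ∈ Finset.univ.filter (fun p : Fin (n + 1) × Fin (n + 1) => p.1 < p.2),
        ((v p.1).1 * (v p.2).2 - (v p.1).2 * (v p.2).1) ^ 2‖
      ≤ (∏ i, nsV i) ^ n := hdisc
    _ ≤ (((n : ℝ) + 2) ^ (2 * (n + 1))) ^ n := by
        apply pow_le_pow_left₀ (Finset.prod_nonneg (fun i _ => hnsV0 i)) hprodV
    _ = ((n : ℝ) + 2) ^ (2 * (n + 1) * n) := by rw [← pow_mul]
    _ ≤ (n : ℝ) ^ (6 * n ^ 2) := by exact_mod_cast hnat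
end

section
/- Let n ≥ 2 and define C_n = (−1)^{n(3n−1)/4} · (2π)^{n(n+1)/2} (n+1)^{(n²+n−4)/2} ((n+1)!)^n / ∏_{m=1}^{n−1} (m+n+1)!. Then |C_n| > e^{−12n²}. -/
open Finset

private lemma facAux (n : ℕ) (hn : 2 ≤ n) : ∀ m, m ≤ n - 1 →
    Nat.factorial (m + n + 1) ≤ Nat.factorial (n + 1) * (2 * n) ^ m := by
  intro m
  induction m with
  | zero => simp
  | succ k ih =>
    intro h
    have hk : k ≤ n - 1 := by omega
    have h1 : k + 1 + n + 1 = (k + n + 1) + 1 := by ring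
    calc Nat.factorial (k + 1 + n + 1) = (k + n + 2) * Nat.factorial (k + n + 1) := by
          rw [h1, Nat.factorial_succ]
      _ ≤ (2 * n) * (Nat.factorial (n + 1) * (2 * n) ^ k) :=
          Nat.mul_le_mul (by omega) (ih hk)
      _ = Nat.factorial (n + 1) * (2 * n) ^ (k + 1) := by ring

private lemma sumAux (n : ℕ) (hn : 2 ≤ n) :
    (∑ m ∈ Icc 1 (n - 1), m) * 2 = n * (n - 1) := by
  have hIcc : Icc 1 (n - 1) = Ico 1 n := by
    rw [← Finset.Ico_add_one_right_eq_Icc]; congr 1; omega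
  have h0 : Ico 0 n = insert 0 (Ico 1 n) :=
    (Finset.insert_Ico_add_one_left_eq_Ico (by omega)).symm
  have : ∑ i ∈ range n, i = ∑ m ∈ Icc 1 (n - 1), m := by
    rw [hIcc, Finset.range_eq_Ico, h0, Finset.sum_insert (by simp), zero_add]
  rw [← this, Finset.sum_range_id_mul_two]

private lemma prodAux (n : ℕ) (hn : 2 ≤ n) :
    (∏ m ∈ Icc 1 (n - 1), Nat.factorial (m + n + 1)) ≤
      Nat.factorial (n + 1) ^ n * (n + 1) ^ ((n ^ 2 + n - 4) / 2) * 2 ^ (n ^ 2) := by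
  set S := ∑ m ∈ Icc 1 (n - 1), m with hS
  have hS2 : S * 2 = n * (n - 1) := sumAux n hn
  have hcard : (Icc 1 (n - 1)).card = n - 1 := by
    rw [Nat.card_Icc]; omega
  have step1 : (∏ m ∈ Icc 1 (n - 1), Nat.factorial (m + n + 1)) ≤
      ∏ m ∈ Icc 1 (n - 1), (Nat.factorial (n + 1) * (2 * n) ^ m) :=
    Finset.prod_le_prod' fun i hi => facAux n hn i (Finset.mem_Icc.mp hi).2
  have step2 : (∏ m ∈ Icc 1 (n - 1), (Nat.factorial (n + 1) * (2 * n) ^ m)) =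
      Nat.factorial (n + 1) ^ (n - 1) * (2 * n) ^ S := by
    rw [Finset.prod_mul_distrib, Finset.prod_const, hcard,
      Finset.prod_pow_eq_pow_sum]
  refine le_trans step1 (step2 ▸ ?_)
  have hmul : n * (n - 1) = n ^ 2 - n := by
    rw [Nat.mul_sub, mul_one, sq]
  have hle : n ≤ n ^ 2 := by nlinarith
  have hB : S ≤ (n ^ 2 + n - 4) / 2 := by omega
  have hN : S ≤ n ^ 2 := by omega
  have e1 : Nat.factorial (n + 1) ^ (n - 1) ≤ Nat.factorial (n + 1) ^ n :=
    Nat.pow_le_pow_right (Nat.one_le_iff_ne_zero.mpr (Nat.factorial_ne_zero _)) (by omega)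
  have e2 : (2 * n) ^ S ≤ (n + 1) ^ ((n ^ 2 + n - 4) / 2) * 2 ^ (n ^ 2) := by
    calc (2 * n) ^ S = 2 ^ S * n ^ S := by rw [mul_pow]
      _ ≤ 2 ^ (n ^ 2) * (n + 1) ^ ((n ^ 2 + n - 4) / 2) :=
          Nat.mul_le_mul (Nat.pow_le_pow_right (by omega) hN)
            (le_trans (Nat.pow_le_pow_left (by omega) S)
              (Nat.pow_le_pow_right (by omega) hB))
      _ = (n + 1) ^ ((n ^ 2 + n - 4) / 2) * 2 ^ (n ^ 2) := by ring
  calc Nat.factorial (n + 1) ^ (n - 1) * (2 * n) ^ S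
      ≤ Nat.factorial (n + 1) ^ n * ((n + 1) ^ ((n ^ 2 + n - 4) / 2) * 2 ^ (n ^ 2)) :=
        Nat.mul_le_mul e1 e2
    _ = Nat.factorial (n + 1) ^ n * (n + 1) ^ ((n ^ 2 + n - 4) / 2) * 2 ^ (n ^ 2) := by
        ring

/-- The constant `C_n` from Glutsyuk's formula for the period determinant. -/
noncomputable def Cconst (n : ℕ) : ℝ :=
  (-1) ^ (n * (3 * n - 1) / 4) * (2 * Real.pi) ^ (n * (n + 1) / 2) *
    ((n : ℝ) + 1) ^ ((n ^ 2 + n - 4) / 2) * ((Nat.factorial (n + 1) : ℝ)) ^ n /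
    ∏ m ∈ Finset.Icc 1 (n - 1), (Nat.factorial (m + n + 1) : ℝ)

/-- For `n ≥ 2`: `|C_n| > e^(−12n²)`. -/
theorem stmt15 (n : ℕ) (hn : 2 ≤ n) :
    |Cconst n| > Real.exp (-(12 * (n : ℝ) ^ 2)) := by
  set A := n * (n + 1) / 2 with hA
  set B := (n ^ 2 + n - 4) / 2 with hB
  set P : ℝ := ∏ m ∈ Finset.Icc 1 (n - 1), (Nat.factorial (m + n + 1) : ℝ) with hPdef
  have hP : 0 < P := Finset.prod_pos fun i _ => by positivity
  have habs : |Cconst n| =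
      (2 * Real.pi) ^ A * ((n : ℝ) + 1) ^ B * ((Nat.factorial (n + 1) : ℝ)) ^ n / P := by
    unfold Cconst
    rw [abs_div, abs_mul, abs_mul, abs_mul, abs_pow, abs_neg, abs_one, one_pow, one_mul,
      abs_of_nonneg (by positivity : (0:ℝ) ≤ (2 * Real.pi) ^ A),
      abs_of_nonneg (by positivity : (0:ℝ) ≤ ((n : ℝ) + 1) ^ B),
      abs_of_nonneg (by positivity : (0:ℝ) ≤ ((Nat.factorial (n + 1) : ℝ)) ^ n),
      abs_of_pos hP]
  have hPle : P ≤ ((Nat.factorial (n + 1) : ℝ)) ^ n * ((n : ℝ) + 1) ^ B * 2 ^ (n ^ 2) := by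
    have := prodAux n hn
    have hc : P = ((∏ m ∈ Finset.Icc 1 (n - 1), Nat.factorial (m + n + 1) : ℕ) : ℝ) := by
      rw [hPdef]; push_cast; ring
    rw [hc]
    calc ((∏ m ∈ Finset.Icc 1 (n - 1), Nat.factorial (m + n + 1) : ℕ) : ℝ)
        ≤ ((Nat.factorial (n + 1) ^ n * (n + 1) ^ B * 2 ^ (n ^ 2) : ℕ) : ℝ) := by
          exact_mod_cast this
      _ = ((Nat.factorial (n + 1) : ℝ)) ^ n * ((n : ℝ) + 1) ^ B * 2 ^ (n ^ 2) := by
          push_cast; ring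
  have key : (1 : ℝ) / 2 ^ (n ^ 2) ≤ |Cconst n| := by
    rw [habs]
    have h1 : (1 : ℝ) ≤ (2 * Real.pi) ^ A :=
      one_le_pow₀ (by nlinarith [Real.pi_gt_three])
    have h2 : (1 : ℝ) / 2 ^ (n ^ 2) ≤ ((n : ℝ) + 1) ^ B * ((Nat.factorial (n + 1) : ℝ)) ^ n / P := by
      rw [div_le_div_iff₀ (by positivity) hP, one_mul]
      calc P ≤ ((Nat.factorial (n + 1) : ℝ)) ^ n * ((n : ℝ) + 1) ^ B * 2 ^ (n ^ 2) := hPle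
        _ = ((n : ℝ) + 1) ^ B * ((Nat.factorial (n + 1) : ℝ)) ^ n * 2 ^ (n ^ 2) := by ring
    calc (1 : ℝ) / 2 ^ (n ^ 2)
        ≤ ((n : ℝ) + 1) ^ B * ((Nat.factorial (n + 1) : ℝ)) ^ n / P := h2
      _ ≤ (2 * Real.pi) ^ A * ((n : ℝ) + 1) ^ B * ((Nat.factorial (n + 1) : ℝ)) ^ n / P := by
          apply div_le_div_of_nonneg_right (hc := hP.le)
          have hXpos : (0:ℝ) ≤ ((n : ℝ) + 1) ^ B * ((Nat.factorial (n + 1) : ℝ)) ^ n := by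
            positivity
          have := mul_le_mul_of_nonneg_right h1 hXpos
          rw [one_mul] at this
          linarith [this, (mul_assoc ((2 * Real.pi) ^ A) (((n : ℝ) + 1) ^ B)
            (((Nat.factorial (n + 1) : ℝ)) ^ n)).symm.le]
  have hlt : Real.exp (-(12 * (n : ℝ) ^ 2)) < 1 / 2 ^ (n ^ 2) := by
    have h2n : (2 : ℝ) ^ (n ^ 2) = Real.exp ((n ^ 2 : ℕ) * Real.log 2) := by
      rw [← Real.log_pow, Real.exp_log (by positivity)]
    rw [h2n, one_div, ← Real.exp_neg, Real.exp_lt_exp]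
    have hlog : Real.log 2 < 1 := by
      nlinarith [Real.log_two_lt_d9]
    have hn2 : (0 : ℝ) < (n : ℝ) ^ 2 := by positivity
    push_cast
    nlinarith [mul_lt_mul_of_pos_left hlog hn2, hn2]
  exact lt_of_lt_of_le hlt key
end

section
/- Let h(x,y) = c_{−1} ∏_{i=0}^{n} (y − c_i x) be a homogeneous polynomial of degree n+1 ≥ 3 with ‖h‖_max = 1 (the maximum of |h| on the unit sphere of ℂ²), and suppose the Fubini–Study distance of the y-axis to each zero line {y = c_i x} of h is greater than 1/√n. Then |c_i| < √n for every i, and (n+1)^{−(n+1)/2} < |c_{−1}| ≤ 1. -/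
open MvPolynomial

/-- Hermitian inner product on ℂ², linear in the first argument. -/
noncomputable def hinner (v w : ℂ × ℂ) : ℂ :=
  v.1 * (starRingEnd ℂ) w.1 + v.2 * (starRingEnd ℂ) w.2

/-- Fubini–Study distance between the complex lines through the origin
spanned by `u` and `v` (the angle between the lines). -/
noncomputable def fsDist (u v : ℂ × ℂ) : ℝ :=
  Real.arccos (‖hinner u v‖ / (hnorm u * hnorm v))

lemma sin_inv_sqrt_ge (n : ℕ) (hn : 2 ≤ n) :
    1 / Real.sqrt (n + 1) ≤ Real.sin (1 / Real.sqrt n) := by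
  have hn2 : (2:ℝ) ≤ n := by exact_mod_cast hn
  have hn0 : (0:ℝ) < n := by linarith
  have hs : (0:ℝ) < Real.sqrt n := Real.sqrt_pos.mpr hn0
  have hs1 : (1:ℝ) ≤ Real.sqrt n := by
    rw [show (1:ℝ) = Real.sqrt 1 by simp]
    exact Real.sqrt_le_sqrt (by linarith)
  set x : ℝ := 1 / Real.sqrt n with hx
  have hxpos : 0 < x := by positivity
  have hx2 : x ^ 2 = 1 / n := by
    rw [hx, div_pow, one_pow, Real.sq_sqrt hn0.le]
  have hxle : x ≤ 1 := by rw [hx]; exact div_le_one_of_le₀ hs1 hs.le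
  have hsin := Real.sin_gt_sub_cube hxpos
  have hxn : x ^ 2 ≤ 1 / 2 := by
    rw [hx2, div_le_div_iff₀ hn0 (by norm_num)]; linarith
  have hsub : 1 / Real.sqrt (n + 1) ≤ x - x ^ 3 / 4 := by
    have hpos : 0 < x - x ^ 3 / 4 := by nlinarith
    have hsq : (1 / Real.sqrt (n + 1)) ^ 2 ≤ (x - x ^ 3 / 4) ^ 2 := by
      have h1 : (1 / Real.sqrt ((n:ℝ) + 1)) ^ 2 = 1 / ((n:ℝ) + 1) := by
        rw [div_pow, one_pow, Real.sq_sqrt (by positivity)]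
      have expand : (x - x ^ 3 / 4) ^ 2 = x ^ 2 * (1 - x ^ 2 / 4) ^ 2 := by ring
      rw [h1, expand, hx2]
      have e : 1/(n:ℝ) * (1 - 1/(n:ℝ)/4)^2 = ((4*(n:ℝ)-1)^2)/(16*(n:ℝ)^3) := by
        field_simp; ring
      rw [e, div_le_div_iff₀ (by positivity) (by positivity)]
      nlinarith
    have h0 : (0:ℝ) ≤ 1 / Real.sqrt (n+1) := by positivity
    nlinarith
  linarith [pow_pos hxpos 3]

lemma key1 (n : ℕ) (hn : 2 ≤ n) (t : ℝ) (ht : 0 ≤ t)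
    (hd : Real.arccos (t / Real.sqrt (1 + t ^ 2)) > 1 / Real.sqrt n) :
    t < Real.sqrt n := by
  have hn0 : (0:ℝ) < n := by positivity
  set s : ℝ := t / Real.sqrt (1 + t ^ 2) with hs
  have hspos : 0 ≤ s := by positivity
  have h1t : (0:ℝ) < 1 + t ^ 2 := by positivity
  have hsin : Real.sin (1 / Real.sqrt n) < Real.sin (Real.arccos s) := by
    refine Real.sin_lt_sin_of_lt_of_le_pi_div_two ?_
      (Real.arccos_le_pi_div_two.mpr hspos) hd
    have h1 : (0:ℝ) ≤ 1 / Real.sqrt n := by positivity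
    nlinarith [Real.pi_pos]
  rw [Real.sin_arccos] at hsin
  have hs2 : 1 - s ^ 2 = 1 / (1 + t ^ 2) := by
    rw [hs, div_pow, Real.sq_sqrt h1t.le]
    field_simp
    ring
  rw [hs2] at hsin
  have h2 : 1 / Real.sqrt (n + 1) < Real.sqrt (1 / (1 + t ^ 2)) :=
    lt_of_le_of_lt (sin_inv_sqrt_ge n hn) hsin
  have h3 : Real.sqrt (1 / (1 + t ^ 2)) = 1 / Real.sqrt (1 + t ^ 2) := by
    rw [one_div, one_div, Real.sqrt_inv]
  rw [h3] at h2
  have ha : 0 < Real.sqrt (1 + t^2) := Real.sqrt_pos.mpr h1t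
  have hb : 0 < Real.sqrt ((n:ℝ) + 1) := Real.sqrt_pos.mpr (by positivity)
  rw [div_lt_div_iff₀ hb ha] at h2
  have h5 : 1 + t ^ 2 < n + 1 := by
    nlinarith [Real.sq_sqrt h1t.le, Real.sq_sqrt (show (0:ℝ) ≤ (n:ℝ)+1 by positivity)]
  nlinarith [Real.sq_sqrt hn0.le, Real.sqrt_nonneg (n:ℝ)]

/-- For `h(x,y) = c₋₁ ∏ᵢ (y − cᵢ x)` of degree `n+1 ≥ 3` with `‖h‖_max = 1`,
if the Fubini–Study distance of the `y`-axis to each zero line `{y = cᵢ x}`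
is greater than `1/√n`, then `|cᵢ| < √n` for all `i` and
`(n+1)^(−(n+1)/2) < |c₋₁| ≤ 1`. -/
theorem stmt17 (n : ℕ) (hn : 2 ≤ n) (cm : ℂ) (c : Fin (n + 1) → ℂ)
    (h : MvPolynomial (Fin 2) ℂ)
    (hh : h = C cm * ∏ i, (X 1 - C (c i) * X 0))
    (hmax : sphereMax h = 1)
    (hdist : ∀ i, fsDist ((0 : ℂ), (1 : ℂ)) ((1 : ℂ), c i) > 1 / Real.sqrt n) :
    (∀ i, ‖c i‖ < Real.sqrt n) ∧
      ((n : ℝ) + 1) ^ (-(((n : ℝ) + 1) / 2)) < ‖cm‖ ∧ ‖cm‖ ≤ 1 := by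
  have hc : ∀ i, ‖c i‖ < Real.sqrt n := by
    intro i
    have hd := hdist i
    have hfs : fsDist ((0 : ℂ), (1 : ℂ)) ((1 : ℂ), c i)
        = Real.arccos (‖c i‖ / Real.sqrt (1 + ‖c i‖ ^ 2)) := by
      simp [fsDist, hinner, hnorm]
    rw [hfs] at hd
    exact key1 n hn _ (norm_nonneg _) hd
  refine ⟨hc, ?_⟩
  -- evaluation formula
  have heval : ∀ x y : ℂ, MvPolynomial.eval ![x, y] h = cm * ∏ i, (y - c i * x) := by
    intro x y
    simp [hh]
  set S : Set ℝ :=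
    {r : ℝ | ∃ x y : ℂ, ‖x‖ ^ 2 + ‖y‖ ^ 2 = 1 ∧ r = ‖MvPolynomial.eval ![x, y] h‖} with hS
  have hSm : sphereMax h = sSup S := rfl
  have hmem : ‖cm‖ ∈ S := by
    refine ⟨0, 1, by norm_num, ?_⟩
    rw [heval 0 1]; simp
  set M : ℝ := ‖cm‖ * ∏ i, Real.sqrt (1 + ‖c i‖ ^ 2) with hM
  have hub : ∀ r ∈ S, r ≤ M := by
    rintro r ⟨x, y, hxy, rfl⟩
    rw [heval x y, norm_mul, norm_prod]
    refine mul_le_mul_of_nonneg_left (Finset.prod_le_prod (fun i _ => norm_nonneg _)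
      (fun i _ => ?_)) (norm_nonneg cm)
    have h1 : ‖y - c i * x‖ ≤ ‖y‖ + ‖c i‖ * ‖x‖ := by
      calc ‖y - c i * x‖ ≤ ‖y‖ + ‖c i * x‖ := norm_sub_le _ _
        _ = ‖y‖ + ‖c i‖ * ‖x‖ := by rw [norm_mul]
    have hsq : (‖y‖ + ‖c i‖ * ‖x‖) ^ 2 ≤ 1 + ‖c i‖ ^ 2 := by
      nlinarith [sq_nonneg (‖x‖ - ‖c i‖ * ‖y‖), hxy]
    calc ‖y - c i * x‖ ≤ ‖y‖ + ‖c i‖ * ‖x‖ := h1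
      _ = Real.sqrt ((‖y‖ + ‖c i‖ * ‖x‖) ^ 2) := by
          rw [Real.sqrt_sq (by positivity)]
      _ ≤ Real.sqrt (1 + ‖c i‖ ^ 2) := Real.sqrt_le_sqrt hsq
  have hle1 : ‖cm‖ ≤ 1 := by
    rw [← hmax, hSm]
    exact le_csSup ⟨M, hub⟩ hmem
  have h1M : 1 ≤ M := by
    rw [← hmax, hSm]
    exact csSup_le ⟨‖cm‖, hmem⟩ hub
  -- strict product bound
  have hPpos : 0 < ∏ i, Real.sqrt (1 + ‖c i‖ ^ 2) := by positivity
  have hcm0 : 0 < ‖cm‖ := by nlinarith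
  have hQ : (∏ i : Fin (n+1), Real.sqrt (1 + ‖c i‖ ^ 2))
      < Real.sqrt ((n:ℝ) + 1) ^ (n + 1) := by
    rw [show Real.sqrt ((n:ℝ) + 1) ^ (n + 1)
        = ∏ _i : Fin (n+1), Real.sqrt ((n:ℝ) + 1) by
      rw [Finset.prod_const, Finset.card_univ, Fintype.card_fin]]
    refine Finset.prod_lt_prod_of_nonempty (fun i _ => by positivity) (fun i _ => ?_)
      Finset.univ_nonempty
    apply Real.sqrt_lt_sqrt (by positivity)
    have := hc i
    nlinarith [Real.sq_sqrt (show (0:ℝ) ≤ n by positivity), norm_nonneg (c i),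
      Real.sqrt_nonneg (n:ℝ)]
  have hQpos : 0 < Real.sqrt ((n:ℝ) + 1) ^ (n + 1) := by positivity
  have hlt : 1 < ‖cm‖ * Real.sqrt ((n:ℝ) + 1) ^ (n + 1) := by
    calc (1:ℝ) ≤ M := h1M
      _ < ‖cm‖ * Real.sqrt ((n:ℝ) + 1) ^ (n + 1) := by
          rw [hM]; exact mul_lt_mul_of_pos_left hQ hcm0
  have hrw : Real.sqrt ((n:ℝ) + 1) ^ (n + 1) = ((n:ℝ) + 1) ^ ((((n:ℝ) + 1)) / 2) := by
    rw [Real.sqrt_eq_rpow, ← Real.rpow_natCast (((n:ℝ) + 1) ^ ((1:ℝ)/2)) (n+1),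
      ← Real.rpow_mul (by positivity)]
    congr 1
    push_cast
    ring
  refine ⟨?_, hle1⟩
  rw [Real.rpow_neg (by positivity), ← one_div]
  rw [div_lt_iff₀ (by positivity)]
  rw [← hrw]
  linarith
end
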